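/- arXiv:1503.04026 — 5 statements merged into one kernel-verified Lean document; each statement's English description precedes it below -/
import Mathlib

section
/- Let y : ℂ → ℂ be an entire function, not identically zero, satisfying the linear ODE with constant coefficients a_k·y^(k) + a_{k−1}·y^(k−1) + … + a_0·y = 0 (a_j ∈ ℂ, a_k ≠ 0), where y^(j) denotes the j-th complex derivative. Assume that any two distinct roots of the characteristic polynomial P(X) = a_k X^k + … + a_1 X + a_0 have distinct real parts. Then for every α ≥ 0 the set of zeros of y in the closed horizontal strip Π_α = {z ∈ ℂ : |Im z| ≤ α} is finite. -/
open Polynomial Complex Filter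

noncomputable section StripZeros

/-- Submodule of smooth (entire) functions `ℂ → ℂ`. -/
def Sm : Submodule ℂ (ℂ → ℂ) where
  carrier := {f | ContDiff ℂ (⊤ : ℕ∞) f}
  add_mem' {f} {g} hf hg := Set.mem_setOf.mpr (ContDiff.add (show ContDiff ℂ (⊤ : ℕ∞) f from hf) (show ContDiff ℂ (⊤ : ℕ∞) g from hg))
  zero_mem' := Set.mem_setOf.mpr (show ContDiff ℂ (⊤ : ℕ∞) (0 : ℂ → ℂ) from contDiff_const)
  smul_mem' c f hf := Set.mem_setOf.mpr (ContDiff.const_smul c (show ContDiff ℂ (⊤ : ℕ∞) f from hf))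

lemma smoothSm (f : Sm) : ContDiff ℂ (⊤ : ℕ∞) (f : ℂ → ℂ) := f.2

lemma diffSm (f : Sm) : Differentiable ℂ (f : ℂ → ℂ) := (smoothSm f).differentiable (by simp)

lemma memSm {f : ℂ → ℂ} (h : ContDiff ℂ (⊤ : ℕ∞) f) : f ∈ Sm := h

/-- Differentiation as a linear endomorphism of `Sm`. -/
def Dop : Sm →ₗ[ℂ] Sm where
  toFun f := ⟨deriv (f : ℂ → ℂ), memSm (contDiff_infty_iff_deriv.mp (smoothSm f)).2⟩
  map_add' f g := Subtype.ext <| funext fun z => deriv_add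
    ((diffSm f).differentiableAt) ((diffSm g).differentiableAt)
  map_smul' c f := Subtype.ext <| funext fun z => by
    show deriv ((c • f : Sm) : ℂ → ℂ) z = (c • deriv (f : ℂ → ℂ)) z
    have h1 : ((c • f : Sm) : ℂ → ℂ) = c • (f : ℂ → ℂ) := rfl
    rw [h1, Pi.smul_apply]
    exact deriv_const_smul c ((diffSm f).differentiableAt)

lemma Dop_apply (f : Sm) : (Dop f : ℂ → ℂ) = deriv (f : ℂ → ℂ) := rfl

lemma Dop_pow_apply (n : ℕ) (f : Sm) :
    ((Dop ^ n) f : ℂ → ℂ) = iteratedDeriv n (f : ℂ → ℂ) := by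
  induction n with
  | zero => simp [iteratedDeriv_zero]
  | succ n ih =>
    have : (Dop ^ (n+1)) f = Dop ((Dop ^ n) f) := by rw [pow_succ']; rfl
    rw [this, Dop_apply, ih, iteratedDeriv_succ]

/-- `z ↦ q(z) e^{l z}` as an element of `Sm`. -/
def polyExpSm (q : Polynomial ℂ) (l : ℂ) : Sm :=
  ⟨fun z => q.eval z * Complex.exp (l * z),
    memSm (Differentiable.contDiff ((q.differentiable).mul
      (Complex.differentiable_exp.comp (differentiable_id.const_mul l))))⟩

lemma polyExpSm_apply (q : Polynomial ℂ) (l : ℂ) (z : ℂ) :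
    (polyExpSm q l : ℂ → ℂ) z = q.eval z * Complex.exp (l * z) := rfl

lemma hasDerivAt_polyExp (q : Polynomial ℂ) (l z : ℂ) :
    HasDerivAt (fun z => q.eval z * Complex.exp (l * z))
      (q.derivative.eval z * Complex.exp (l * z) + q.eval z * (Complex.exp (l * z) * (l * 1))) z :=
  (q.hasDerivAt z).mul (((hasDerivAt_id z).const_mul l).cexp)

lemma Dop_sub_polyExp (μ l : ℂ) (q : Polynomial ℂ) :
    (Dop - algebraMap ℂ (Module.End ℂ Sm) μ) (polyExpSm q l)
      = polyExpSm (Polynomial.derivative q + (l - μ) • q) l := by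
  apply Subtype.ext
  funext z
  have h1 : ((Dop - algebraMap ℂ (Module.End ℂ Sm) μ) (polyExpSm q l) : ℂ → ℂ) z
      = deriv (polyExpSm q l : ℂ → ℂ) z - μ * ((polyExpSm q l : ℂ → ℂ) z) := by
    simp [LinearMap.sub_apply, Dop_apply, Module.algebraMap_end_apply]
  rw [h1]
  have h2 : deriv (polyExpSm q l : ℂ → ℂ) z
      = q.derivative.eval z * Complex.exp (l * z)
        + q.eval z * (Complex.exp (l * z) * (l * 1)) := (hasDerivAt_polyExp q l z).deriv
  rw [h2, polyExpSm_apply, polyExpSm_apply]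
  simp only [Polynomial.eval_add, Polynomial.eval_smul, smul_eq_mul]
  ring

/-- Solving `q' + c q = p` in polynomials. -/
lemma exists_poly_ode (c : ℂ) (p : Polynomial ℂ) :
    ∃ q : Polynomial ℂ, Polynomial.derivative q + c • q = p := by
  rcases eq_or_ne c 0 with rfl | hc
  · refine ⟨p.sum fun n a => Polynomial.C (a / (n + 1)) * Polynomial.X ^ (n + 1), ?_⟩
    rw [zero_smul, add_zero]
    rw [Polynomial.sum, map_sum]
    conv_rhs => rw [← Polynomial.sum_C_mul_X_pow_eq p]
    rw [Polynomial.sum]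
    refine Finset.sum_congr rfl fun n _ => ?_
    rw [Polynomial.derivative_C_mul_X_pow]
    congr 2
    push_cast
    rw [div_mul_cancel₀ _ (Nat.cast_add_one_ne_zero n : ((n:ℂ)+1) ≠ 0)]
  · suffices H : ∀ n (p : Polynomial ℂ), p.natDegree ≤ n →
        ∃ q : Polynomial ℂ, Polynomial.derivative q + c • q = p from
      H p.natDegree p le_rfl
    intro n
    induction n with
    | zero =>
      intro p hp
      refine ⟨Polynomial.C (c⁻¹ * p.coeff 0), ?_⟩
      rw [Polynomial.eq_C_of_natDegree_le_zero hp]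
      rw [Polynomial.derivative_C, Polynomial.smul_C, zero_add]
      congr 1
      field_simp
      rw [Polynomial.coeff_C_zero, smul_eq_mul]; field_simp
    | succ n ih =>
      intro p hp
      obtain ⟨s, hs⟩ := ih ((-(c⁻¹)) • Polynomial.derivative p)
        (le_trans (Polynomial.natDegree_smul_le _ _)
          (le_trans (Polynomial.natDegree_derivative_le p) (by omega)))
      refine ⟨c⁻¹ • p + s, ?_⟩
      rw [map_add, Polynomial.derivative_smul, smul_add]
      have hc' : c • c⁻¹ • p = p := by
        rw [smul_smul, mul_inv_cancel₀ hc, one_smul]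
      calc c⁻¹ • Polynomial.derivative p + Polynomial.derivative s + (c • c⁻¹ • p + c • s)
          = (c • c⁻¹ • p) + (c⁻¹ • Polynomial.derivative p
              + (Polynomial.derivative s + c • s)) := by abel
        _ = p := by rw [hs, hc', ← add_smul]; simp

/-- The differential operator `∏ (D - μ)` over a list of roots. -/
def opProd (s : List ℂ) : Module.End ℂ Sm :=
  (s.map (fun μ => (Dop : Module.End ℂ Sm) - algebraMap ℂ (Module.End ℂ Sm) μ)).prod

lemma opProd_nil : opProd [] = 1 := rfl

lemma opProd_cons (μ : ℂ) (t : List ℂ) :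
    opProd (μ :: t) = ((Dop : Module.End ℂ Sm) - algebraMap ℂ (Module.End ℂ Sm) μ) * opProd t := by
  rw [opProd, List.map_cons, List.prod_cons]; rfl

lemma exists_particular (t : List ℂ) (l : ℂ) (p : Polynomial ℂ) :
    ∃ q : Polynomial ℂ, opProd t (polyExpSm q l) = polyExpSm p l := by
  induction t generalizing p with
  | nil => exact ⟨p, by rw [opProd_nil, Module.End.one_apply]⟩
  | cons μ t ih =>
    obtain ⟨r, hr⟩ := exists_poly_ode (l - μ) p
    obtain ⟨q, hq⟩ := ih r
    refine ⟨q, ?_⟩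
    rw [opProd_cons, Module.End.mul_apply, hq, Dop_sub_polyExp, hr]

lemma exp_sol (f : Sm) (μ : ℂ)
    (h : ((Dop : Module.End ℂ Sm) - algebraMap ℂ (Module.End ℂ Sm) μ) f = 0) :
    f = polyExpSm (Polynomial.C ((f : ℂ → ℂ) 0)) μ := by
  have hder : ∀ z, deriv (f : ℂ → ℂ) z = μ * (f : ℂ → ℂ) z := by
    intro z
    have := congrArg (fun g : Sm => (g : ℂ → ℂ) z) h
    simpa [LinearMap.sub_apply, Dop_apply, Module.algebraMap_end_apply, sub_eq_zero] using this
  set g : ℂ → ℂ := fun z => (f : ℂ → ℂ) z * Complex.exp (-μ * z) with hg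
  have hgd : ∀ z, HasDerivAt g 0 z := by
    intro z
    have h1 : HasDerivAt g
        (deriv (f : ℂ → ℂ) z * Complex.exp (-μ * z)
          + (f : ℂ → ℂ) z * (Complex.exp (-μ * z) * (-μ * 1))) z :=
      ((diffSm f).differentiableAt.hasDerivAt).mul (((hasDerivAt_id z).const_mul (-μ)).cexp)
    have h2 : deriv (f : ℂ → ℂ) z * Complex.exp (-μ * z)
        + (f : ℂ → ℂ) z * (Complex.exp (-μ * z) * (-μ * 1)) = 0 := by
      rw [hder z]; ring
    rwa [h2] at h1
  have hconst : ∀ z, g z = g 0 := by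
    intro z
    exact is_const_of_deriv_eq_zero (fun w => (hgd w).differentiableAt)
      (fun w => (hgd w).deriv) z 0
  apply Subtype.ext
  funext z
  have := hconst z
  rw [hg] at this
  simp only at this
  have hexp : Complex.exp (-μ * z) * Complex.exp (μ * z) = 1 := by
    rw [← Complex.exp_add]; ring_nf; exact Complex.exp_zero
  have : (f : ℂ → ℂ) z * (Complex.exp (-μ * z) * Complex.exp (μ * z))
      = (f : ℂ → ℂ) 0 * Complex.exp (μ * z) := by
    rw [← mul_assoc, this]; simp
  rw [hexp, mul_one] at this
  rw [polyExpSm_apply, Polynomial.eval_C]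
  exact this

/-- Representation of solutions of `∏(D-μ) f = 0` as exponential polynomials. -/
lemma repr_of_opProd_eq_zero (s : List ℂ) :
    ∀ f : Sm, opProd s f = 0 →
      ∃ c : ℂ → Polynomial ℂ, ∀ z, (f : ℂ → ℂ) z
        = ∑ l ∈ s.toFinset, ((c l).eval z) * Complex.exp (l * z) := by
  induction s with
  | nil =>
    intro f hf
    refine ⟨fun _ => 0, fun z => ?_⟩
    have : f = 0 := by rw [opProd_nil, Module.End.one_apply] at hf; exact hf
    simp [this]
  | cons μ t ih =>
    intro f hf
    rw [opProd_cons, Module.End.mul_apply] at hf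
    have hu := exp_sol (opProd t f) μ hf
    obtain ⟨q, hq⟩ := exists_particular t μ (Polynomial.C ((opProd t f : ℂ → ℂ) 0))
    have hdiff : opProd t (f - polyExpSm q μ) = 0 := by
      rw [map_sub, hq, ← hu, sub_self]
    obtain ⟨c, hc⟩ := ih (f - polyExpSm q μ) hdiff
    refine ⟨fun l => (if l = μ then q else 0) + (if l ∈ t.toFinset then c l else 0), fun z => ?_⟩
    have hfz : (f : ℂ → ℂ) z
        = q.eval z * Complex.exp (μ * z)
          + ∑ l ∈ t.toFinset, ((c l).eval z) * Complex.exp (l * z) := by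
      have h1 : ((f - polyExpSm q μ : Sm) : ℂ → ℂ) z
          = (f : ℂ → ℂ) z - q.eval z * Complex.exp (μ * z) := rfl
      have := hc z
      rw [h1] at this
      linear_combination this
    rw [hfz]
    rw [List.toFinset_cons]
    rcases Finset.decidableMem μ t.toFinset with hμ | hμ
    · -- μ ∉ t.toFinset
      rw [Finset.sum_insert hμ]
      simp only [if_pos rfl]
      rw [if_neg hμ]
      congr 1
      · simp
      · refine Finset.sum_congr rfl fun l hl => ?_
        rw [if_neg (by rintro rfl; exact hμ hl), if_pos hl]
        simp
    · -- μ ∈ t.toFinset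
      rw [Finset.insert_eq_self.mpr hμ]
      have hterm : ∀ l ∈ t.toFinset,
          Polynomial.eval z ((if l = μ then q else 0) + if l ∈ t.toFinset then c l else 0)
              * Complex.exp (l * z)
            = (if l = μ then Polynomial.eval z q * Complex.exp (μ * z) else 0)
              + Polynomial.eval z (c l) * Complex.exp (l * z) := by
        intro l hl
        rw [if_pos hl, Polynomial.eval_add, add_mul]
        congr 1
        by_cases h : l = μ
        · subst h; rw [if_pos rfl, if_pos rfl]
        · rw [if_neg h, if_neg h, Polynomial.eval_zero, zero_mul]
      rw [Finset.sum_congr rfl hterm, Finset.sum_add_distrib,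
        Finset.sum_ite_eq' t.toFinset μ fun _ => Polynomial.eval z q * Complex.exp (μ * z),
        if_pos hμ]

lemma aeval_listProd (L : List ℂ) :
    Polynomial.aeval Dop ((L.map fun l => Polynomial.X - Polynomial.C l).prod) = opProd L := by
  induction L with
  | nil => simp [opProd_nil]
  | cons μ t ih =>
    rw [List.map_cons, List.prod_cons, map_mul, ih, opProd_cons]
    congr 1
    rw [map_sub, Polynomial.aeval_X, Polynomial.aeval_C]

lemma aeval_apply_eq (k : ℕ) (a : ℕ → ℂ) (f : Sm) (z : ℂ) :
    ((Polynomial.aeval Dop (∑ j ∈ Finset.range (k + 1),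
        Polynomial.C (a j) * Polynomial.X ^ j) f : Sm) : ℂ → ℂ) z
      = ∑ j ∈ Finset.range (k + 1), a j * iteratedDeriv j (f : ℂ → ℂ) z := by
  rw [map_sum, LinearMap.coe_sum, Finset.sum_apply, Submodule.coe_sum, Finset.sum_apply]
  refine Finset.sum_congr rfl fun j _ => ?_
  have h1 : Polynomial.aeval Dop (Polynomial.C (a j) * Polynomial.X ^ j)
      = algebraMap ℂ (Module.End ℂ Sm) (a j) * Dop ^ j := by
    rw [map_mul, Polynomial.aeval_C, map_pow, Polynomial.aeval_X]
  rw [h1, Module.End.mul_apply, Module.algebraMap_end_apply]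
  have h2 : ((a j • ((Dop ^ j) f) : Sm) : ℂ → ℂ) z = a j * (((Dop ^ j) f : ℂ → ℂ) z) := rfl
  rw [h2, Dop_pow_apply]

/-- The main representation theorem: solutions of the ODE are exponential polynomials with
frequencies among the characteristic roots. -/
lemma ode_repr (k : ℕ) (a : ℕ → ℂ) (hak : a k ≠ 0) (y : ℂ → ℂ) (hy : Differentiable ℂ y)
    (hode : ∀ z : ℂ, ∑ j ∈ Finset.range (k + 1), a j * iteratedDeriv j y z = 0) :
    ∃ (F : Finset ℂ) (c : ℂ → Polynomial ℂ),
      (∀ l ∈ F, (∑ j ∈ Finset.range (k + 1),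
          Polynomial.C (a j) * Polynomial.X ^ j).IsRoot l) ∧
      ∀ z, y z = ∑ l ∈ F, ((c l).eval z) * Complex.exp (l * z) := by
  set P : Polynomial ℂ := ∑ j ∈ Finset.range (k + 1), Polynomial.C (a j) * Polynomial.X ^ j with hP
  have hPk : P.coeff k = a k := by
    rw [hP, Polynomial.finset_sum_coeff]
    rw [Finset.sum_congr rfl fun j _ => by
      rw [Polynomial.coeff_C_mul, Polynomial.coeff_X_pow]]
    simp [Finset.sum_ite_eq]
  have hP0 : P ≠ 0 := fun h => hak (by rw [← hPk, h, Polynomial.coeff_zero])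
  set fy : Sm := ⟨y, memSm hy.contDiff⟩ with hfy
  have hPfy : Polynomial.aeval Dop P fy = 0 := by
    apply Subtype.ext
    funext z
    have := aeval_apply_eq k a fy z
    rw [← hP] at this
    rw [this]
    exact hode z
  set L : List ℂ := P.roots.toList with hL
  have hfact : P = Polynomial.C P.leadingCoeff
      * ((L.map fun l => Polynomial.X - Polynomial.C l).prod) := by
    have := (IsAlgClosed.splits P).eq_prod_roots
    have hprod : (Multiset.map (fun l => Polynomial.X - Polynomial.C l) P.roots).prod
        = ((L.map fun l => Polynomial.X - Polynomial.C l).prod) := by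
      conv_lhs => rw [← Multiset.coe_toList P.roots]
      rw [Multiset.map_coe, Multiset.prod_coe]
    conv_lhs => rw [this]
    rw [hprod]
  have hop : opProd L fy = 0 := by
    have h1 := hPfy
    rw [hfact] at h1
    rw [map_mul, Polynomial.aeval_C, aeval_listProd, Module.End.mul_apply,
      Module.algebraMap_end_apply] at h1
    have hlc : P.leadingCoeff ≠ 0 := Polynomial.leadingCoeff_ne_zero.mpr hP0
    exact (smul_eq_zero.mp h1).resolve_left hlc
  obtain ⟨c, hc⟩ := repr_of_opProd_eq_zero L fy hop
  refine ⟨L.toFinset, c, fun l hl => ?_, hc⟩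
  rw [List.mem_toFinset, hL, Multiset.mem_toList] at hl
  exact Polynomial.isRoot_of_mem_roots hl

/-- The "norm polynomial" of a complex polynomial. -/
def realQ (p : Polynomial ℂ) : Polynomial ℝ :=
  ∑ i ∈ Finset.range (p.natDegree + 1), Polynomial.C ‖p.coeff i‖ * Polynomial.X ^ i

lemma norm_eval_le_realQ (p : Polynomial ℂ) (z : ℂ) (s : ℝ) (hz : ‖z‖ ≤ s) :
    ‖p.eval z‖ ≤ (realQ p).eval s := by
  rw [realQ, Polynomial.eval_finset_sum]
  have h1 : p.eval z = ∑ i ∈ Finset.range (p.natDegree + 1), p.coeff i * z ^ i :=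
    Polynomial.eval_eq_sum_range z
  rw [h1]
  refine le_trans (norm_sum_le _ _) (Finset.sum_le_sum fun i _ => ?_)
  rw [norm_mul, norm_pow, Polynomial.eval_mul, Polynomial.eval_C, Polynomial.eval_pow,
    Polynomial.eval_X]
  exact mul_le_mul_of_nonneg_left (pow_le_pow_left₀ (norm_nonneg z) hz i) (norm_nonneg _)

/-- Lower bound for a nonzero polynomial far from the origin. -/
lemma poly_lower (p : Polynomial ℂ) (hp : p ≠ 0) :
    ∃ m : ℝ, 0 < m ∧ ∃ R : ℝ, ∀ z : ℂ, R ≤ ‖z‖ → m ≤ ‖p.eval z‖ := by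
  rcases lt_or_ge 0 p.degree with hd | hd
  · have htend : Filter.Tendsto (fun z : ℂ => ‖p.eval z‖) (Filter.comap norm Filter.atTop)
        Filter.atTop := Polynomial.tendsto_norm_atTop p hd Filter.tendsto_comap
    have hev := htend.eventually_ge_atTop 1
    rw [Filter.eventually_comap] at hev
    obtain ⟨R, hR⟩ := Filter.eventually_atTop.mp hev
    exact ⟨1, one_pos, R, fun z hz => hR ‖z‖ hz z rfl⟩
  · have hc : p = Polynomial.C (p.coeff 0) := Polynomial.eq_C_of_degree_le_zero hd
    refine ⟨‖p.coeff 0‖, ?_, 0, fun z _ => ?_⟩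
    · rw [norm_pos_iff]
      intro h
      exact hp (by rw [hc, h, map_zero])
    · rw [hc]; simp

/-- decay of a polynomial times a decaying exponential -/
lemma poly_exp_decay (Q : Polynomial ℝ) (δ : ℝ) (hδ : 0 < δ) (B α : ℝ) :
    Filter.Tendsto (fun t : ℝ => Q.eval (t + α) * Real.exp (-δ * t + B))
      Filter.atTop (nhds 0) := by
  have key : ∀ t : ℝ, Q.eval (t + α) * Real.exp (-δ * t + B)
      = Real.exp B * ((Q.comp (Polynomial.C α + Polynomial.C δ⁻¹ * Polynomial.X)).eval (δ * t)
          / Real.exp (δ * t)) := by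
    intro t
    rw [Polynomial.eval_comp]
    simp only [Polynomial.eval_add, Polynomial.eval_mul, Polynomial.eval_C, Polynomial.eval_X]
    rw [← mul_assoc, inv_mul_cancel₀ (ne_of_gt hδ), one_mul, Real.exp_add,
      neg_mul, Real.exp_neg, add_comm α t]
    field_simp
  rw [funext key]
  have := ((Q.comp (Polynomial.C α + Polynomial.C δ⁻¹ * Polynomial.X)).tendsto_div_exp_atTop).comp
    (Filter.Tendsto.const_mul_atTop hδ Filter.tendsto_id)
  simpa using (this.const_mul (Real.exp B))

/-- No zeros of the exponential polynomial far out in the strip (direction `ε`). -/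
lemma no_zeros_far (F : Finset ℂ) (c : ℂ → Polynomial ℂ) (hF : F.Nonempty)
    (hne : ∀ l ∈ F, c l ≠ 0)
    (hinj : ∀ l ∈ F, ∀ l' ∈ F, l ≠ l' → l.re ≠ l'.re)
    (α : ℝ) (hα : 0 ≤ α) (ε : ℝ) (hε : ε = 1 ∨ ε = -1) :
    ∃ R : ℝ, ∀ z : ℂ, |z.im| ≤ α → R ≤ ε * z.re →
      ∑ l ∈ F, (c l).eval z * Complex.exp (l * z) ≠ 0 := by
  have hε2 : ε * ε = 1 := by rcases hε with rfl | rfl <;> norm_num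
  have hεabs : |ε| = 1 := by rcases hε with rfl | rfl <;> norm_num
  obtain ⟨lam, hlamF, hlam⟩ := F.exists_max_image (fun l => ε * l.re) hF
  obtain ⟨m, hm, R₀, hR₀⟩ := poly_lower (c lam) (hne lam hlamF)
  -- the dominating function
  set h : ℝ → ℝ := fun t => ∑ l ∈ F.erase lam,
    (realQ (c l)).eval (t + α)
      * Real.exp (-(ε * lam.re - ε * l.re) * t + |l.im - lam.im| * α) with hh
  have hδpos : ∀ l ∈ F.erase lam, 0 < ε * lam.re - ε * l.re := by
    intro l hl
    have hlF := Finset.mem_of_mem_erase hl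
    have hne' : l ≠ lam := Finset.ne_of_mem_erase hl
    have hle : ε * l.re ≤ ε * lam.re := hlam l hlF
    have : l.re ≠ lam.re := hinj l hlF lam hlamF hne'
    rcases lt_or_eq_of_le hle with h | h
    · linarith
    · exfalso
      apply this
      have := congrArg (fun x => ε * x) h
      simpa [← mul_assoc, hε2] using this
  have htend : Filter.Tendsto h Filter.atTop (nhds 0) := by
    rw [hh]
    have : (0 : ℝ) = ∑ l ∈ F.erase lam, (0 : ℝ) := by simp
    rw [this]
    exact tendsto_finset_sum _ fun l hl =>
      poly_exp_decay (realQ (c l)) _ (hδpos l hl) _ α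
  obtain ⟨R₁, hR₁⟩ := Filter.eventually_atTop.mp (htend.eventually (gt_mem_nhds hm))
  refine ⟨max (max R₀ R₁) 1, fun z him hre => ?_⟩
  intro hzero
  set t : ℝ := ε * z.re with ht
  have ht1 : 1 ≤ t := le_trans (le_max_right _ _) hre
  have ht0 : 0 ≤ t := by linarith
  have htR₀ : R₀ ≤ t := le_trans (le_trans (le_max_left _ _) (le_max_left _ _)) hre
  have htR₁ : R₁ ≤ t := le_trans (le_trans (le_max_right _ _) (le_max_left _ _)) hre
  have habs_re : |z.re| = t := by
    have h1 : |t| = |z.re| := by rw [ht, abs_mul, hεabs, one_mul]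
    rw [← h1, _root_.abs_of_nonneg ht0]
  have hznorm : ‖z‖ ≤ t + α := by
    calc ‖z‖ ≤ |z.re| + |z.im| := Complex.norm_le_abs_re_add_abs_im z
      _ ≤ t + α := by rw [habs_re]; linarith
  have hzre : t ≤ ‖z‖ := by
    rw [← habs_re]
    exact Complex.abs_re_le_norm z
  set E : ℝ := Real.exp ((lam * z).re) with hE
  have hEpos : 0 < E := Real.exp_pos _
  -- bound each term
  have hterm : ∀ l ∈ F.erase lam, ‖(c l).eval z * Complex.exp (l * z)‖
      ≤ ((realQ (c l)).eval (t + α)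
          * Real.exp (-(ε * lam.re - ε * l.re) * t + |l.im - lam.im| * α)) * E := by
    intro l hl
    have e1 : (ε * l.re - ε * lam.re) * t = (l.re - lam.re) * z.re := by
      calc (ε * l.re - ε * lam.re) * t = (ε * ε) * ((l.re - lam.re) * z.re) := by rw [ht]; ring
        _ = (l.re - lam.re) * z.re := by rw [hε2, one_mul]
    have e2 : (lam.im - l.im) * z.im ≤ |l.im - lam.im| * α := by
      calc (lam.im - l.im) * z.im ≤ |(lam.im - l.im) * z.im| := le_abs_self _
        _ = |l.im - lam.im| * |z.im| := by rw [abs_mul, abs_sub_comm lam.im l.im]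
        _ ≤ |l.im - lam.im| * α := mul_le_mul_of_nonneg_left him (abs_nonneg _)
    have hexp_le : (l * z).re
        ≤ (-(ε * lam.re - ε * l.re) * t + |l.im - lam.im| * α) + (lam * z).re := by
      rw [Complex.mul_re, Complex.mul_re]
      have e1' : -(ε * lam.re - ε * l.re) * t = (l.re - lam.re) * z.re := by
        rw [← e1]; ring
      linarith [e1', e2]
    have hnexp : ‖Complex.exp (l * z)‖ = Real.exp ((l * z).re) := by
      rw [Complex.norm_exp]
    rw [norm_mul, hnexp]
    have hq := norm_eval_le_realQ (c l) z (t + α) hznorm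
    have hee : Real.exp ((l * z).re)
        ≤ Real.exp (-(ε * lam.re - ε * l.re) * t + |l.im - lam.im| * α) * E := by
      rw [hE, ← Real.exp_add]
      exact Real.exp_le_exp.mpr hexp_le
    calc ‖(c l).eval z‖ * Real.exp ((l * z).re)
        ≤ (realQ (c l)).eval (t + α)
          * (Real.exp (-(ε * lam.re - ε * l.re) * t + |l.im - lam.im| * α) * E) :=
          mul_le_mul hq hee (Real.exp_pos _).le
            (le_trans (norm_nonneg _) hq)
      _ = ((realQ (c l)).eval (t + α)
          * Real.exp (-(ε * lam.re - ε * l.re) * t + |l.im - lam.im| * α)) * E := by ring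
  -- from the vanishing of the sum
  have hsplit : (c lam).eval z * Complex.exp (lam * z)
      = -∑ l ∈ F.erase lam, (c l).eval z * Complex.exp (l * z) := by
    have := Finset.add_sum_erase F (fun l => (c l).eval z * Complex.exp (l * z)) hlamF
    rw [hzero] at this
    linear_combination this
  have hlhs : m * E ≤ ‖(c lam).eval z * Complex.exp (lam * z)‖ := by
    rw [norm_mul, Complex.norm_exp]
    exact mul_le_mul_of_nonneg_right (hR₀ z (le_trans htR₀ hzre)) hEpos.le
  have hrhs : ‖(c lam).eval z * Complex.exp (lam * z)‖ ≤ h t * E := by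
    rw [hsplit, norm_neg]
    refine le_trans (norm_sum_le _ _) ?_
    rw [hh, Finset.sum_mul]
    exact Finset.sum_le_sum hterm
  have hcontr : m ≤ h t := le_of_mul_le_mul_right (le_trans hlhs hrhs) hEpos
  exact absurd hcontr (not_le.mpr (hR₁ t htR₁))

end StripZeros

/-- An entire function `y`, not identically zero, satisfying a linear ODE
with constant coefficients whose distinct characteristic roots have distinct real parts,
has finitely many zeros in every closed horizontal strip `{z : |Im z| ≤ α}`. -/
theorem stmt_0 (k : ℕ) (a : ℕ → ℂ) (hak : a k ≠ 0)
    (y : ℂ → ℂ) (hy : Differentiable ℂ y) (hy0 : ∃ z, y z ≠ 0)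
    (hode : ∀ z : ℂ, ∑ j ∈ Finset.range (k + 1), a j * iteratedDeriv j y z = 0)
    (hroots : ∀ μ ν : ℂ,
      (∑ j ∈ Finset.range (k + 1), Polynomial.C (a j) * Polynomial.X ^ j).IsRoot μ →
      (∑ j ∈ Finset.range (k + 1), Polynomial.C (a j) * Polynomial.X ^ j).IsRoot ν →
      μ ≠ ν → μ.re ≠ ν.re) :
    ∀ α : ℝ, 0 ≤ α → {z : ℂ | |z.im| ≤ α ∧ y z = 0}.Finite := by
  intro α hα
  obtain ⟨F, c, hroot, hrep⟩ := ode_repr k a hak y hy hode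
  set F' : Finset ℂ := F.filter (fun l => c l ≠ 0) with hF'
  have hrep' : ∀ z, y z = ∑ l ∈ F', ((c l).eval z) * Complex.exp (l * z) := by
    intro z
    rw [hrep z]
    refine (Finset.sum_filter_of_ne fun l hl hnz => ?_).symm
    intro hc0
    rw [hc0] at hnz
    simp at hnz
  have hF'ne : F'.Nonempty := by
    obtain ⟨z0, hz0⟩ := hy0
    by_contra hemp
    rw [Finset.not_nonempty_iff_eq_empty] at hemp
    exact hz0 (by rw [hrep' z0, hemp, Finset.sum_empty])
  have hne' : ∀ l ∈ F', c l ≠ 0 := fun l hl => (Finset.mem_filter.mp hl).2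
  have hinj : ∀ l ∈ F', ∀ l' ∈ F', l ≠ l' → l.re ≠ l'.re := fun l hl l' hl' hll' =>
    hroots l l' (hroot l (Finset.mem_filter.mp hl).1) (hroot l' (Finset.mem_filter.mp hl').1) hll'
  obtain ⟨Rp, hRp⟩ := no_zeros_far F' c hF'ne hne' hinj α hα 1 (Or.inl rfl)
  obtain ⟨Rm, hRm⟩ := no_zeros_far F' c hF'ne hne' hinj α hα (-1) (Or.inr rfl)
  set ρ : ℝ := max Rp Rm with hρ
  have hsub : {z : ℂ | |z.im| ≤ α ∧ y z = 0} ⊆ Metric.closedBall (0 : ℂ) (|ρ| + α) := by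
    rintro z ⟨him, hz0⟩
    have hzero : ∑ l ∈ F', ((c l).eval z) * Complex.exp (l * z) = 0 := by
      rw [← hrep' z]; exact hz0
    have h₁ : z.re < Rp := by
      by_contra hge
      push_neg at hge
      exact hRp z him (by linarith [one_mul z.re]) hzero
    have h₂ : -z.re < Rm := by
      by_contra hge
      push_neg at hge
      exact hRm z him (by linarith) hzero
    have habs : |z.re| ≤ |ρ| := by
      have hRpρ : Rp ≤ |ρ| := le_trans (le_max_left _ _) (le_abs_self _)
      have hRmρ : Rm ≤ |ρ| := le_trans (le_max_right _ _) (le_abs_self _)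
      rw [abs_le]
      constructor <;> linarith
    rw [Metric.mem_closedBall, dist_zero_right]
    calc ‖z‖ ≤ |z.re| + |z.im| := Complex.norm_le_abs_re_add_abs_im z
      _ ≤ |ρ| + α := add_le_add habs him
  by_contra hinf
  have hinf' : {z : ℂ | |z.im| ≤ α ∧ y z = 0}.Infinite := hinf
  obtain ⟨x, _, hacc⟩ := hinf'.exists_accPt_of_subset_isCompact
    (isCompact_closedBall (0 : ℂ) (|ρ| + α)) hsub
  rw [accPt_iff_frequently] at hacc
  have hfreq : ∃ᶠ w in nhdsWithin x {x}ᶜ, y w = 0 := by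
    rw [frequently_nhdsWithin_iff]
    exact hacc.mono fun w hw => ⟨hw.2.2, hw.1⟩
  have hanal : AnalyticOnNhd ℂ y Set.univ := fun z _ => hy.analyticAt z
  have hzero := hanal.eqOn_zero_of_preconnected_of_frequently_eq_zero
    isPreconnected_univ (Set.mem_univ x) hfreq
  obtain ⟨z0, hz0⟩ := hy0
  exact hz0 (hzero (Set.mem_univ z0))
end

section
/- Let λ_1, …, λ_m ∈ ℂ be distinct complex numbers with pairwise distinct real parts, let A_1, …, A_m be polynomials with complex coefficients, not all zero, and set y(z) = Σ_{j=1}^m A_j(z) e^{λ_j z}. Then for every α ≥ 0 the set of zeros of y in the closed horizontal strip Π_α = {z ∈ ℂ : |Im z| ≤ α} is finite. -/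
open Filter Polynomial Topology Finset

private lemma poly_exp_decay_s1 (P : ℝ[X]) {δ : ℝ} (hδ : 0 < δ) :
    Tendsto (fun x : ℝ => P.eval x * Real.exp (-(δ * x))) atTop (nhds 0) := by
  have h1 : Tendsto (fun x : ℝ => δ * x) atTop atTop :=
    Tendsto.const_mul_atTop hδ tendsto_id
  have h2 := (Polynomial.tendsto_div_exp_atTop
    (P.comp (Polynomial.C δ⁻¹ * Polynomial.X))).comp h1
  convert h2 using 2 with x
  simp only [Function.comp_apply, Polynomial.eval_comp, Polynomial.eval_mul, Polynomial.eval_C,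
    Polynomial.eval_X, Real.exp_neg, div_eq_mul_inv]
  rw [inv_mul_cancel_left₀ hδ.ne']

private lemma norm_eval_le (p : ℂ[X]) (z : ℂ) :
    ‖p.eval z‖ ≤ ∑ i ∈ Finset.range (p.natDegree + 1), ‖p.coeff i‖ * ‖z‖ ^ i := by
  rw [Polynomial.eval_eq_sum_range]
  refine (norm_sum_le _ _).trans ?_
  refine Finset.sum_le_sum fun i _ => ?_
  rw [norm_mul, norm_pow]

private lemma one_sided (m : ℕ) (l : ℕ → ℂ)
    (hre : ∀ i j, i < m → j < m → i ≠ j → (l i).re ≠ (l j).re)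
    (A : ℕ → Polynomial ℂ) (hA : ∃ j, j < m ∧ A j ≠ 0) {α : ℝ} (hα : 0 ≤ α) :
    ∃ R : ℝ, ∀ z : ℂ, |z.im| ≤ α → R ≤ z.re →
      ∑ j ∈ Finset.range m, (A j).eval z * Complex.exp (l j * z) ≠ 0 := by
  classical
  set S : Finset ℕ := (Finset.range m).filter (fun j => A j ≠ 0) with hSdef
  have hS : S.Nonempty := by
    obtain ⟨j, hj, hAj⟩ := hA
    exact ⟨j, by simp [hSdef, hj, hAj]⟩
  obtain ⟨j₀, hj₀S, hmax⟩ := S.exists_max_image (fun j => (l j).re) hS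
  have hj₀m : j₀ < m := (Finset.mem_filter.1 hj₀S).1 |> Finset.mem_range.1
  have hAj₀ : A j₀ ≠ 0 := (Finset.mem_filter.1 hj₀S).2
  set L : Filter ℂ := Filter.comap Complex.re Filter.atTop ⊓
      Filter.principal {z : ℂ | |z.im| ≤ α} with hLdef
  have htre : Tendsto Complex.re L atTop :=
    (Filter.tendsto_comap).mono_left inf_le_left
  have hnorm : Tendsto (fun z : ℂ => ‖z‖) L atTop :=
    tendsto_atTop_mono (fun z => Complex.re_le_norm z) htre
  -- lower bound for the dominant polynomial
  have hlow : ∃ c : ℝ, 0 < c ∧ ∀ᶠ z in L, c ≤ ‖(A j₀).eval z‖ := by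
    rcases lt_or_ge 0 (A j₀).degree with hdeg | hdeg
    · refine ⟨1, one_pos, ?_⟩
      exact (Polynomial.tendsto_norm_atTop (A j₀) hdeg hnorm).eventually
        (eventually_ge_atTop 1)
    · obtain ⟨a, ha⟩ : ∃ a : ℂ, A j₀ = Polynomial.C a :=
        ⟨(A j₀).coeff 0, Polynomial.eq_C_of_degree_le_zero hdeg⟩
      have ha0 : a ≠ 0 := fun h => hAj₀ (by simp [ha, h])
      refine ⟨‖a‖, norm_pos_iff.2 ha0, Filter.Eventually.of_forall fun z => ?_⟩
      simp [ha]
  -- tail tends to zero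
  have hh : Tendsto (fun z : ℂ => ∑ j ∈ S.erase j₀,
      (A j).eval z * Complex.exp ((l j - l j₀) * z)) L (nhds 0) := by
    rw [show (0 : ℂ) = ∑ j ∈ S.erase j₀, 0 by simp]
    refine tendsto_finset_sum _ fun j hj => ?_
    have hjS : j ∈ S := Finset.mem_of_mem_erase hj
    have hjne : j ≠ j₀ := Finset.ne_of_mem_erase hj
    have hjm : j < m := Finset.mem_range.1 (Finset.mem_filter.1 hjS).1
    set β : ℂ := l j - l j₀ with hβ
    set δ : ℝ := (l j₀).re - (l j).re with hδdef
    have hδ : 0 < δ := by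
      have h1 : (l j).re ≤ (l j₀).re := hmax j hjS
      have h2 : (l j).re ≠ (l j₀).re := hre j j₀ hjm hj₀m hjne
      simp only [hδdef]; cases h1.lt_or_eq with
      | inl h => linarith
      | inr h => exact absurd h h2
    set K : ℝ := Real.exp (|β.im| * α) with hK
    set P : ℝ[X] := ∑ i ∈ Finset.range ((A j).natDegree + 1),
        Polynomial.C ‖(A j).coeff i‖ * (Polynomial.X + Polynomial.C α) ^ i with hP
    have hPeval : ∀ x : ℝ, P.eval x = ∑ i ∈ Finset.range ((A j).natDegree + 1),
        ‖(A j).coeff i‖ * (x + α) ^ i := by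
      intro x; simp [hP, Polynomial.eval_finset_sum]
    have hbound : ∀ᶠ z in L, ‖(A j).eval z * Complex.exp (β * z)‖ ≤
        (P * Polynomial.C K).eval z.re * Real.exp (-(δ * z.re)) := by
      have h0 : ∀ᶠ z in L, 0 ≤ z.re := htre.eventually (eventually_ge_atTop 0)
      have hstrip : ∀ᶠ z in L, |z.im| ≤ α := by
        rw [hLdef]; exact (eventually_principal.2 fun z hz => hz).filter_mono inf_le_right
      filter_upwards [h0, hstrip] with z hz0 hzs
      rw [norm_mul, Complex.norm_exp]
      have hz_norm : ‖z‖ ≤ z.re + α := by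
        refine (Complex.norm_le_abs_re_add_abs_im z).trans ?_
        rw [_root_.abs_of_nonneg hz0]
        exact add_le_add_right hzs _
      have h1 : ‖(A j).eval z‖ ≤ P.eval z.re := by
        refine (norm_eval_le (A j) z).trans ?_
        rw [hPeval]
        refine Finset.sum_le_sum fun i _ => ?_
        exact mul_le_mul_of_nonneg_left
          (pow_le_pow_left₀ (norm_nonneg z) hz_norm i) (norm_nonneg _)
      have h2 : Real.exp ((β * z).re) ≤ K * Real.exp (-(δ * z.re)) := by
        rw [hK, ← Real.exp_add]
        apply Real.exp_le_exp.2
        have hre_eq : (β * z).re = β.re * z.re - β.im * z.im := Complex.mul_re β z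
        have hβre : β.re = -δ := by simp [hβ, hδdef, Complex.sub_re]
        have : -(β.im * z.im) ≤ |β.im| * α := by
          calc -(β.im * z.im) ≤ |β.im * z.im| := neg_le_abs _
            _ = |β.im| * |z.im| := abs_mul _ _
            _ ≤ |β.im| * α := mul_le_mul_of_nonneg_left hzs (abs_nonneg _)
        rw [hre_eq, hβre]
        linarith
      calc ‖(A j).eval z‖ * Real.exp ((β * z).re)
          ≤ P.eval z.re * (K * Real.exp (-(δ * z.re))) := by
            refine mul_le_mul h1 h2 (Real.exp_pos _).le ?_
            exact le_trans (norm_nonneg _) h1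
        _ = (P * Polynomial.C K).eval z.re * Real.exp (-(δ * z.re)) := by
            simp [Polynomial.eval_mul]; ring
    have hlim : Tendsto (fun z : ℂ => (P * Polynomial.C K).eval z.re *
        Real.exp (-(δ * z.re))) L (nhds 0) :=
      (poly_exp_decay_s1 (P * Polynomial.C K) hδ).comp htre
    exact squeeze_zero_norm' hbound hlim
  -- combine
  obtain ⟨c, hc, hev⟩ := hlow
  have hlt : ∀ᶠ z in L, ‖∑ j ∈ S.erase j₀,
      (A j).eval z * Complex.exp ((l j - l j₀) * z)‖ < c :=
    (norm_zero (E := ℂ) ▸ hh.norm).eventually_lt_const hc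
  have hfin : ∀ᶠ z in L, ∑ j ∈ Finset.range m, (A j).eval z * Complex.exp (l j * z) ≠ 0 := by
    filter_upwards [hev, hlt] with z h1 h2
    have hsum : ∑ j ∈ Finset.range m, (A j).eval z * Complex.exp (l j * z)
        = ∑ j ∈ S, (A j).eval z * Complex.exp (l j * z) := by
      refine (Finset.sum_filter_of_ne fun j _ hne => ?_).symm
      intro hAj; exact hne (by simp [hAj])
    have hfac : ∑ j ∈ S, (A j).eval z * Complex.exp (l j * z)
        = Complex.exp (l j₀ * z) * ((A j₀).eval z +
            ∑ j ∈ S.erase j₀, (A j).eval z * Complex.exp ((l j - l j₀) * z)) := by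
      rw [← Finset.add_sum_erase _ _ hj₀S, mul_add, Finset.mul_sum]
      congr 1
      · ring
      · refine Finset.sum_congr rfl fun j _ => ?_
        rw [mul_comm (Complex.exp (l j₀ * z)), mul_assoc, ← Complex.exp_add]
        congr 2
        ring
    rw [hsum, hfac]
    refine mul_ne_zero (Complex.exp_ne_zero _) fun hzero => ?_
    have : (A j₀).eval z = -(∑ j ∈ S.erase j₀,
        (A j).eval z * Complex.exp ((l j - l j₀) * z)) := by linear_combination hzero
    rw [this, norm_neg] at h1
    exact absurd (h1.trans_lt h2) (lt_irrefl c)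
  -- extract R
  rw [hLdef, eventually_inf_principal, Filter.eventually_comap, eventually_atTop] at hfin
  obtain ⟨R, hR⟩ := hfin
  exact ⟨R, fun z h1 h2 => hR z.re h2 z rfl h1⟩


/-- An exponential polynomial `y(z) = Σ_j A_j(z) e^{λ_j z}` with the `λ_j`
distinct and with pairwise distinct real parts and the `A_j` not all zero has finitely many
zeros in every closed horizontal strip `{z : |Im z| ≤ α}`. -/
theorem stmt_1 (m : ℕ) (l : ℕ → ℂ)
    (hdist : ∀ i j, i < m → j < m → i ≠ j → l i ≠ l j)
    (hre : ∀ i j, i < m → j < m → i ≠ j → (l i).re ≠ (l j).re)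
    (A : ℕ → Polynomial ℂ) (hA : ∃ j, j < m ∧ A j ≠ 0) :
    ∀ α : ℝ, 0 ≤ α →
      {z : ℂ | |z.im| ≤ α ∧
        ∑ j ∈ Finset.range m, (A j).eval z * Complex.exp (l j * z) = 0}.Finite := by
  intro α hα
  set f : ℂ → ℂ := fun z => ∑ j ∈ Finset.range m, (A j).eval z * Complex.exp (l j * z)
    with hf
  have hdiff : Differentiable ℂ f := by
    apply Differentiable.fun_sum
    intro j _
    exact ((A j).differentiable).mul (Complex.differentiable_exp.comp
      (differentiable_id.const_mul _))
  have hanal : AnalyticOnNhd ℂ f Set.univ :=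
    hdiff.differentiableOn.analyticOnNhd isOpen_univ
  obtain ⟨R₁, hR₁⟩ := one_sided m l hre A hA hα
  -- left side
  set A' : ℕ → Polynomial ℂ := fun j => (A j).comp (-Polynomial.X) with hA'def
  have hA'eval : ∀ j z, (A' j).eval z = (A j).eval (-z) := by
    intro j z; simp [hA'def, Polynomial.eval_comp]
  have hre' : ∀ i j, i < m → j < m → i ≠ j → (-(l i)).re ≠ (-(l j)).re := by
    intro i j hi hj hij h
    exact hre i j hi hj hij (by simpa [Complex.neg_re, neg_inj] using h)
  have hA' : ∃ j, j < m ∧ A' j ≠ 0 := by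
    obtain ⟨j, hj, hAj⟩ := hA
    refine ⟨j, hj, fun h => hAj ?_⟩
    apply Polynomial.funext
    intro x
    have := congrArg (Polynomial.eval (-x)) h
    rw [hA'eval j (-x)] at this
    simpa using this
  obtain ⟨R₂, hR₂⟩ := one_sided m (fun j => -(l j)) hre' A' hA' hα
  have hsub : {z : ℂ | |z.im| ≤ α ∧ f z = 0} ⊆
      Metric.closedBall (0 : ℂ) (|R₁| + |R₂| + α) := by
    rintro z ⟨hzs, hz0⟩
    have h1 : z.re < R₁ := by
      by_contra h
      exact hR₁ z hzs (le_of_not_gt h) hz0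
    have h2 : -z.re < R₂ := by
      by_contra h
      refine hR₂ (-z) (by simpa using hzs) (by simpa using le_of_not_gt h) ?_
      have : ∑ j ∈ Finset.range m, (A' j).eval (-z) * Complex.exp (-(l j) * (-z)) = f z := by
        refine Finset.sum_congr rfl fun j _ => ?_
        rw [hA'eval]
        ring_nf
      rw [this, hz0]
    rw [Metric.mem_closedBall, dist_zero_right]
    refine (Complex.norm_le_abs_re_add_abs_im z).trans ?_
    have : |z.re| ≤ |R₁| + |R₂| := by
      rw [abs_le]
      constructor <;>
        nlinarith [le_abs_self R₁, le_abs_self R₂, neg_abs_le R₁, neg_abs_le R₂, abs_nonneg R₁,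
          abs_nonneg R₂]
    linarith [hzs]
  by_contra hfinite
  have hinf : {z : ℂ | |z.im| ≤ α ∧ f z = 0}.Infinite := hfinite
  obtain ⟨x, hxK, hacc⟩ := hinf.exists_accPt_of_subset_isCompact
    (isCompact_closedBall _ _) hsub
  have hfreq : ∃ᶠ z in nhdsWithin x {x}ᶜ, f z = 0 := by
    rw [frequently_nhdsWithin_iff]
    exact (accPt_iff_frequently.1 hacc).mono fun z hz => ⟨hz.2.2, hz.1⟩
  have hzero := hanal.eqOn_zero_of_preconnected_of_frequently_eq_zero
    isPreconnected_univ (Set.mem_univ x) hfreq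
  have hne : f ((max R₁ 0 + 1 : ℝ) : ℂ) ≠ 0 := by
    apply hR₁
    · simp [hα]
    · simp
      linarith [le_max_left R₁ (0:ℝ)]
  exact hne (hzero (Set.mem_univ _))
end

section
/- Let k ≥ 2, let λ_1, …, λ_k ∈ ℂ with Re λ_1 < Re λ_2 < … < Re λ_k, let a_1, …, a_k be nonzero complex numbers, and set y(z) = Σ_{j=1}^k a_j e^{λ_j z}. Then for every α ≥ 0 the complement Π_α \ G(y,α) can be covered by at most k−1 boxes of height 2α whose widths sum to at most 2α(k−1)Ξ + 2(k−1)Θ·ln 4. -/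
open Set

noncomputable section
namespace Stmt4Aux

lemma convexOn_exp_affine (s : Set ℝ) (hs : Convex ℝ s) (c d : ℝ) :
    ConvexOn ℝ s fun t => Real.exp (c * t + d) := by
  refine ⟨hs, fun x hx y hy p q hp hq hpq => ?_⟩
  have h1 := convexOn_exp.2 (Set.mem_univ (c*x+d)) (Set.mem_univ (c*y+d)) hp hq hpq
  simp only [smul_eq_mul] at h1 ⊢
  have e : c * (p*x + q*y) + d = p*(c*x+d) + q*(c*y+d) := by linear_combination (-d) * hpq
  rw [e]; exact h1

lemma convexOn_congr {s : Set ℝ} {f g : ℝ → ℝ} (hg : ConvexOn ℝ s g)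
    (h : Set.EqOn f g s) : ConvexOn ℝ s f := by
  refine ⟨hg.1, fun x hx y hy p q hp hq hpq => ?_⟩
  have hm : p • x + q • y ∈ s := hg.1 hx hy hp hq hpq
  rw [h hm, h hx, h hy]
  exact hg.2 hx hy hp hq hpq

lemma convexOn_sum {ι : Type*} (s : Finset ι) (t : Set ℝ) (ht : Convex ℝ t) (f : ι → ℝ → ℝ)
    (hf : ∀ i ∈ s, ConvexOn ℝ t (f i)) : ConvexOn ℝ t (fun u => ∑ i ∈ s, f i u) := by
  classical
  induction s using Finset.cons_induction with
  | empty => simpa using convexOn_const (0:ℝ) ht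
  | cons a s ha ih =>
    simp only [Finset.sum_cons]
    exact (hf a (Finset.mem_cons_self _ _)).add (ih fun i hi => hf i (Finset.mem_cons_of_mem hi))

/-- bump function -/
def Wf (δ β : ℕ → ℝ) (A : ℝ) (m : ℕ) (u : ℝ) : ℝ :=
  Real.exp (-(δ m) * max (|u - β m| - A) 0)

/-- sum of bumps -/
def ff (n : ℕ) (δ β : ℕ → ℝ) (A : ℝ) (u : ℝ) : ℝ :=
  ∑ m ∈ Finset.range n, Wf δ β A m u

variable {n : ℕ} {δ β : ℕ → ℝ} {A : ℝ}

lemma Wf_cont (m : ℕ) : Continuous (Wf δ β A m) := by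
  unfold Wf
  apply Real.continuous_exp.comp
  fun_prop

lemma ff_cont : Continuous (ff n δ β A) :=
  continuous_finset_sum _ (fun m _ => Wf_cont m)

lemma Wf_nonneg (m : ℕ) (t : ℝ) : 0 ≤ Wf δ β A m t := Real.exp_nonneg _

lemma Wf_le_one (hδ : 0 < δ m) (t : ℝ) : Wf δ β A m t ≤ 1 := by
  unfold Wf
  rw [Real.exp_le_one_iff]
  have h2 : (0:ℝ) ≤ max (|t - β m| - A) 0 := le_max_right _ _
  nlinarith

lemma Wf_left {m : ℕ} {t : ℝ} (ht : t ≤ β m - A) (hA : 0 ≤ A) :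
    Wf δ β A m t = Real.exp (δ m * t + (-(δ m) * (β m - A))) := by
  unfold Wf
  congr 1
  have h1 : |t - β m| = β m - t := by
    rw [abs_of_nonpos (by linarith)]; ring
  rw [h1, max_eq_left (by linarith)]
  ring

lemma Wf_right {m : ℕ} {t : ℝ} (ht : β m + A ≤ t) (hA : 0 ≤ A) :
    Wf δ β A m t = Real.exp (-(δ m) * t + δ m * (β m + A)) := by
  unfold Wf
  congr 1
  have h1 : |t - β m| = t - β m := by
    rw [abs_of_nonneg (by linarith)]
  rw [h1, max_eq_left (by linarith)]
  ring

lemma Wf_plateau {m : ℕ} {t : ℝ} (h1 : β m - A ≤ t) (h2 : t ≤ β m + A) :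
    Wf δ β A m t = 1 := by
  unfold Wf
  have h3 : |t - β m| - A ≤ 0 := by
    rw [sub_nonpos, abs_le]
    constructor <;> linarith
  rw [max_eq_right h3, mul_zero, Real.exp_zero]

lemma ff_ge_one {m : ℕ} (hm : m < n) {t : ℝ} (h1 : β m - A ≤ t) (h2 : t ≤ β m + A) :
    1 ≤ ff n δ β A t := by
  unfold ff
  calc (1:ℝ) = Wf δ β A m t := (Wf_plateau h1 h2).symm
  _ ≤ _ := Finset.single_le_sum (fun i _ => Wf_nonneg i t) (Finset.mem_range.mpr hm)

lemma integral_exp_affine (c d' : ℝ) (hc : 0 < c) (a b : ℝ) :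
    ∫ t in a..b, Real.exp (c*t + d') = (Real.exp (c*b+d') - Real.exp (c*a+d'))/c := by
  have h : ∀ t : ℝ, HasDerivAt (fun t => Real.exp (c*t+d')/c) (Real.exp (c*t+d')) t := by
    intro t
    have h1 : HasDerivAt (fun t : ℝ => c*t+d') c t := by
      simpa using ((hasDerivAt_id t).const_mul c).add_const d'
    have h2 := (h1.exp).div_const c
    simpa [mul_div_assoc, div_self (ne_of_gt hc)] using h2
  rw [intervalIntegral.integral_eq_sub_of_hasDerivAt (fun t _ => h t)
    ((Real.continuous_exp.comp (by fun_prop)).intervalIntegrable a b)]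
  ring

lemma integral_exp_affine_neg (c d' : ℝ) (hc : 0 < c) (a b : ℝ) :
    ∫ t in a..b, Real.exp (-c*t + d') = (Real.exp (-c*a+d') - Real.exp (-c*b+d'))/c := by
  have h : ∀ t : ℝ, HasDerivAt (fun t => -(Real.exp (-c*t+d'))/c) (Real.exp (-c*t+d')) t := by
    intro t
    have h1 : HasDerivAt (fun t : ℝ => -c*t+d') (-c) t := by
      simpa using ((hasDerivAt_id t).const_mul (-c)).add_const d'
    have h2 := ((h1.exp).neg).div_const c
    simpa [mul_div_assoc, div_self (ne_of_gt hc)] using h2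
  rw [intervalIntegral.integral_eq_sub_of_hasDerivAt (fun t _ => h t)
    ((Real.continuous_exp.comp (by fun_prop)).intervalIntegrable a b)]
  ring

/-- interval integral bound for one bump -/
lemma Wf_integral_le {m : ℕ} (hδ : 0 < δ m) (hA : 0 ≤ A) {x y : ℝ} (hxy : x ≤ y) :
    ∫ t in x..y, Wf δ β A m t ≤ 2*A + 2/δ m := by
  set d := δ m with hd
  set L := β m - A with hL
  set R := β m + A with hR
  set c1 := min (max x L) y with hc1
  set c2 := max (min y R) c1 with hc2
  have hxc1 : x ≤ c1 := le_min (le_max_left _ _) hxy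
  have hc1y : c1 ≤ y := min_le_right _ _
  have hc1c2 : c1 ≤ c2 := le_max_right _ _
  have hc2y : c2 ≤ y := max_le (le_trans (min_le_left _ _) le_rfl) hc1y
  have key1 : ∫ t in x..c1, Wf δ β A m t ≤ 1/d := by
    rcases le_or_gt x L with hxL | hxL
    · have hc1L : c1 ≤ L := by
        rw [hc1, max_eq_right hxL]
        exact min_le_left _ _
      rw [intervalIntegral.integral_congr (g := fun t => Real.exp (d*t + (-d*L)))
        (fun t ht => by
          rw [Set.uIcc_of_le hxc1] at ht
          exact Wf_left (le_trans ht.2 hc1L) hA)]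
      rw [integral_exp_affine d _ hδ]
      have e1 : Real.exp (d*c1 + -d*L) ≤ 1 := by
        rw [Real.exp_le_one_iff]
        nlinarith
      have e2 : 0 < Real.exp (d*x + -d*L) := Real.exp_pos _
      rw [div_le_div_iff₀ hδ hδ]
      nlinarith
    · have : c1 = x := by
        rw [hc1, max_eq_left hxL.le, min_eq_left hxy]
      rw [this, intervalIntegral.integral_same]
      positivity
  have key3 : ∫ t in c2..y, Wf δ β A m t ≤ 1/d := by
    rcases le_or_gt R y with hRy | hRy
    · have hc2R : R ≤ c2 := by
        rw [hc2]
        exact le_trans (by rw [min_eq_right hRy]) (le_max_left _ _)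
      rw [intervalIntegral.integral_congr (g := fun t => Real.exp (-d*t + d*R))
        (fun t ht => by
          rw [Set.uIcc_of_le hc2y] at ht
          exact Wf_right (le_trans hc2R ht.1) hA)]
      rw [integral_exp_affine_neg d _ hδ]
      have e1 : Real.exp (-d*c2 + d*R) ≤ 1 := by
        rw [Real.exp_le_one_iff]
        nlinarith
      have e2 : 0 < Real.exp (-d*y + d*R) := Real.exp_pos _
      rw [div_le_div_iff₀ hδ hδ]
      nlinarith
    · have : c2 = y := by
        rw [hc2, min_eq_left hRy.le, max_eq_left hc1y]
      rw [this, intervalIntegral.integral_same]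
      positivity
  have key2 : ∫ t in c1..c2, Wf δ β A m t ≤ 2*A := by
    have hb : ∫ t in c1..c2, Wf δ β A m t ≤ c2 - c1 := by
      have := intervalIntegral.integral_mono_on (μ := MeasureTheory.volume) hc1c2
        ((Wf_cont (δ := δ) (β := β) (A := A) m).intervalIntegrable (μ := MeasureTheory.volume) c1 c2)
        (intervalIntegrable_const : IntervalIntegrable (fun _ => (1:ℝ)) MeasureTheory.volume c1 c2)
        (fun t _ => Wf_le_one hδ t)
      simpa using this
    have hgap : c2 - c1 ≤ 2*A := by
      have hmin : min y R ≤ c1 + 2*A := by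
        rcases le_or_gt y L with hyL | hyL
        · have : c1 = y := by
            rw [hc1, min_eq_right (le_trans hyL (le_max_right _ _))]
          rw [this]
          have : min y R ≤ y := min_le_left _ _
          linarith
        · have hLc1 : L ≤ c1 := le_min (le_max_right _ _) hyL.le
          have : min y R ≤ R := min_le_right _ _
          rw [hR] at this ⊢
          rw [hL] at hLc1
          linarith
      have : c2 ≤ c1 + 2*A := max_le hmin (by linarith)
      linarith
    linarith
  have hsplit : ∫ t in x..y, Wf δ β A m t
      = (∫ t in x..c1, Wf δ β A m t) + (∫ t in c1..c2, Wf δ β A m t)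
        + (∫ t in c2..y, Wf δ β A m t) := by
    have i1 := intervalIntegral.integral_add_adjacent_intervals
      ((Wf_cont (δ := δ) (β := β) (A := A) m).intervalIntegrable (μ := MeasureTheory.volume) x c1)
      ((Wf_cont (δ := δ) (β := β) (A := A) m).intervalIntegrable (μ := MeasureTheory.volume) c1 c2)
    have i2 := intervalIntegral.integral_add_adjacent_intervals
      ((Wf_cont (δ := δ) (β := β) (A := A) m).intervalIntegrable (μ := MeasureTheory.volume) x c2)
      ((Wf_cont (δ := δ) (β := β) (A := A) m).intervalIntegrable (μ := MeasureTheory.volume) c2 y)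
    rw [← i2, ← i1]
  rw [hsplit]
  have e : (1:ℝ)/d + 1/d = 2/d := by ring
  linarith

lemma cover (n : ℕ) (hn : 1 ≤ n) (β δ : ℕ → ℝ) (hδ : ∀ m, m < n → 0 < δ m)
    (hβ : ∀ m m', m ≤ m' → m' < n → β m ≤ β m') (A : ℝ) (hA : 0 ≤ A) :
    ∃ c w : ℕ → ℝ, (∀ i, 0 ≤ w i) ∧
      (∑ i ∈ Finset.range n, w i ≤ ∑ m ∈ Finset.range n, (2*A + 2/δ m)) ∧
      ∀ u : ℝ, 1 ≤ ff n δ β A u →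
        ∃ i < n, c i ≤ u ∧ u ≤ c i + w i := by
  classical
  have hrne : (Finset.range n).Nonempty := ⟨0, by simp; omega⟩
  have hLmono : ∀ m m', m ≤ m' → m' < n → β m - A ≤ β m' - A := fun m m' h h' => by
    linarith [hβ m m' h h']
  have hRmono : ∀ m m', m ≤ m' → m' < n → β m + A ≤ β m' + A := fun m m' h h' => by
    linarith [hβ m m' h h']
  have hlog : 0 < Real.log (2*(n:ℝ)) := by
    apply Real.log_pos
    have : (1:ℝ) ≤ (n:ℝ) := by exact_mod_cast hn
    linarith
  set xLo : ℝ := (Finset.range n).inf' hrne (fun j => β j - A - Real.log (2*(n:ℝ)) / δ j)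
    with hxLodef
  set xHi : ℝ := (Finset.range n).sup' hrne (fun j => β j + A + Real.log (2*(n:ℝ)) / δ j)
    with hxHidef
  have hxLoL : ∀ m, m < n → xLo ≤ β m - A := by
    intro m hm
    have h1 : xLo ≤ β m - A - Real.log (2*(n:ℝ)) / δ m :=
      Finset.inf'_le _ (Finset.mem_range.mpr hm)
    have h2 : 0 < Real.log (2*(n:ℝ)) / δ m := div_pos hlog (hδ m hm)
    linarith
  have hxHiR : ∀ m, m < n → β m + A ≤ xHi := by
    intro m hm
    have h1 : β m + A + Real.log (2*(n:ℝ)) / δ m ≤ xHi := by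
      rw [hxHidef]; exact Finset.le_sup' (fun j => β j + A + Real.log (2*(n:ℝ)) / δ j) (Finset.mem_range.mpr hm)
    have h2 : 0 < Real.log (2*(n:ℝ)) / δ m := div_pos hlog (hδ m hm)
    linarith
  have hn_pos : (0:ℝ) < (n:ℝ) := by exact_mod_cast hn
  have hexp_log : Real.exp (-Real.log (2*(n:ℝ))) = (2*(n:ℝ))⁻¹ := by
    rw [Real.exp_neg, Real.exp_log (by linarith)]
  have hxLo : ∀ x, x ≤ xLo → ff n δ β A x ≤ 1/2 := by
    intro x hx
    unfold ff
    have hterm : ∀ m ∈ Finset.range n, Wf δ β A m x ≤ (2*(n:ℝ))⁻¹ := by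
      intro m hm'
      have hm : m < n := Finset.mem_range.mp hm'
      have h1 : x ≤ β m - A - Real.log (2*(n:ℝ)) / δ m :=
        le_trans hx (Finset.inf'_le _ (Finset.mem_range.mpr hm))
      have h2 : 0 < Real.log (2*(n:ℝ)) / δ m := div_pos hlog (hδ m hm)
      have habs : |x - β m| = β m - x := by
        rw [abs_of_nonpos (by linarith)]; ring
      unfold Wf
      rw [← hexp_log, Real.exp_le_exp, habs]
      have h3 : max (β m - x - A) 0 = β m - x - A := max_eq_left (by linarith)
      rw [h3]
      have h4 : Real.log (2*(n:ℝ)) / δ m ≤ β m - x - A := by linarith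
      have h5 := (div_le_iff₀ (hδ m hm)).mp h4
      nlinarith [hδ m hm]
    calc ∑ m ∈ Finset.range n, Wf δ β A m x ≤ ∑ m ∈ Finset.range n, (2*(n:ℝ))⁻¹ :=
          Finset.sum_le_sum hterm
    _ = (n:ℝ) * (2*(n:ℝ))⁻¹ := by
        rw [Finset.sum_const, Finset.card_range]; simp
    _ = 1/2 := by field_simp
  have hxHi : ∀ x, xHi ≤ x → ff n δ β A x ≤ 1/2 := by
    intro x hx
    unfold ff
    have hterm : ∀ m ∈ Finset.range n, Wf δ β A m x ≤ (2*(n:ℝ))⁻¹ := by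
      intro m hm'
      have hm : m < n := Finset.mem_range.mp hm'
      have h1 : β m + A + Real.log (2*(n:ℝ)) / δ m ≤ x :=
        le_trans (by rw [hxHidef]; exact Finset.le_sup' (fun j => β j + A + Real.log (2*(n:ℝ)) / δ j) (Finset.mem_range.mpr hm)) hx
      have h2 : 0 < Real.log (2*(n:ℝ)) / δ m := div_pos hlog (hδ m hm)
      have habs : |x - β m| = x - β m := abs_of_nonneg (by linarith)
      unfold Wf
      rw [← hexp_log, Real.exp_le_exp, habs]
      have h3 : max (x - β m - A) 0 = x - β m - A := max_eq_left (by linarith)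
      rw [h3]
      have h4 : Real.log (2*(n:ℝ)) / δ m ≤ x - β m - A := by linarith
      have h5 := (div_le_iff₀ (hδ m hm)).mp h4
      nlinarith [hδ m hm]
    calc ∑ m ∈ Finset.range n, Wf δ β A m x ≤ ∑ m ∈ Finset.range n, (2*(n:ℝ))⁻¹ :=
          Finset.sum_le_sum hterm
    _ = (n:ℝ) * (2*(n:ℝ))⁻¹ := by
        rw [Finset.sum_const, Finset.card_range]; simp
    _ = 1/2 := by field_simp
  set cap : ℕ → ℝ := fun m => max (β m + A) (if m + 1 < n then β (m+1) - A else xHi)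
    with hcapdef
  set flo : ℕ → ℝ := fun m => min (β m - A) (if m = 0 then xLo else β (m-1) + A)
    with hflodef
  set T : ℕ → Set ℝ := fun m =>
      {x : ℝ | (x ∈ Icc (β m + A) (cap m)) ∧ ∀ t ∈ Icc (β m + A) x, 1 ≤ ff n δ β A t}
    with hTdef
  set TL : ℕ → Set ℝ := fun m =>
      {x : ℝ | (x ∈ Icc (flo m) (β m - A)) ∧ ∀ t ∈ Icc x (β m - A), 1 ≤ ff n δ β A t}
    with hTLdef
  have hTmem : ∀ m, m < n → β m + A ∈ T m := by
    intro m hm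
    refine ⟨⟨le_refl _, le_max_left _ _⟩, ?_⟩
    intro t ht
    have : t = β m + A := le_antisymm ht.2 ht.1
    subst this
    exact ff_ge_one hm (by linarith) le_rfl
  have hTLmem : ∀ m, m < n → β m - A ∈ TL m := by
    intro m hm
    refine ⟨⟨min_le_left _ _, le_refl _⟩, ?_⟩
    intro t ht
    have : t = β m - A := le_antisymm ht.2 ht.1
    subst this
    exact ff_ge_one hm le_rfl (by linarith)
  have hTbdd : ∀ m, BddAbove (T m) := fun m => ⟨cap m, fun x hx => hx.1.2⟩
  have hTLbdd : ∀ m, BddBelow (TL m) := fun m => ⟨flo m, fun x hx => hx.1.1⟩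
  set rho : ℕ → ℝ := fun m => sSup (T m) with hrhodef
  set lam : ℕ → ℝ := fun m => sInf (TL m) with hlamdef
  have hrhoR : ∀ m, m < n → β m + A ≤ rho m := fun m hm => le_csSup (hTbdd m) (hTmem m hm)
  have hrhocap : ∀ m, m < n → rho m ≤ cap m :=
    fun m hm => csSup_le ⟨_, hTmem m hm⟩ (fun x hx => hx.1.2)
  have hlamL : ∀ m, m < n → lam m ≤ β m - A := fun m hm => csInf_le (hTLbdd m) (hTLmem m hm)
  have hlamflo : ∀ m, m < n → flo m ≤ lam m :=
    fun m hm => le_csInf ⟨_, hTLmem m hm⟩ (fun x hx => hx.1.1)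
  have hSclosed : IsClosed {u : ℝ | 1 ≤ ff n δ β A u} :=
    isClosed_le continuous_const ff_cont
  have hrhoS : ∀ m, m < n → ∀ t, β m + A ≤ t → t ≤ rho m → 1 ≤ ff n δ β A t := by
    intro m hm t h1 h2
    rcases lt_or_eq_of_le h2 with h2' | h2'
    · obtain ⟨x, hx, hlt⟩ := exists_lt_of_lt_csSup ⟨_, hTmem m hm⟩ h2'
      exact hx.2 t ⟨h1, le_of_lt hlt⟩
    · subst h2'
      rcases eq_or_lt_of_le h1 with h1' | h1'
      · rw [← h1']
        exact ff_ge_one hm (by linarith) le_rfl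
      · have hmem : rho m ∈ closure {u : ℝ | 1 ≤ ff n δ β A u} := by
          rw [Metric.mem_closure_iff]
          intro ε hε
          obtain ⟨x, hx, hlt⟩ := exists_lt_of_lt_csSup ⟨_, hTmem m hm⟩
            (show rho m - ε < rho m by linarith)
          refine ⟨x, hx.2 x ⟨hx.1.1, le_refl _⟩, ?_⟩
          have hxle : x ≤ rho m := le_csSup (hTbdd m) hx
          rw [Real.dist_eq, abs_of_nonneg (by linarith)]
          linarith
        exact hSclosed.closure_subset hmem
  have hlamS : ∀ m, m < n → ∀ t, lam m ≤ t → t ≤ β m - A → 1 ≤ ff n δ β A t := by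
    intro m hm t h1 h2
    rcases lt_or_eq_of_le h1 with h1' | h1'
    · obtain ⟨x, hx, hlt⟩ := exists_lt_of_csInf_lt ⟨_, hTLmem m hm⟩ h1'
      exact hx.2 t ⟨le_of_lt hlt, h2⟩
    · rw [← h1'] at h2 ⊢
      rcases eq_or_lt_of_le h2 with h2' | h2'
      · rw [h2']
        exact ff_ge_one hm le_rfl (by linarith)
      · have : lam m ∈ closure {u : ℝ | 1 ≤ ff n δ β A u} := by
          rw [Metric.mem_closure_iff]
          intro ε hε
          have h3 : lam m < lam m + ε := by linarith
          obtain ⟨x, hx, hlt⟩ := exists_lt_of_csInf_lt ⟨_, hTLmem m hm⟩ h3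
          refine ⟨x, hx.2 x ⟨le_refl _, hx.1.2⟩, ?_⟩
          have hxge : lam m ≤ x := csInf_le (hTLbdd m) hx
          rw [Real.dist_eq, abs_of_nonpos (by linarith)]
          linarith
        exact hSclosed.closure_subset this
  set lam' : ℕ → ℝ := fun m => if m = 0 then lam 0 else max (lam m) (rho (m-1)) with hlam'def
  have hlam'lam : ∀ m, lam m ≤ lam' m := by
    intro m
    rw [hlam'def]
    by_cases h : m = 0
    · simp [h]
    · simp [h]
  have hcapR : ∀ m, m + 1 < n → cap m ≤ β (m+1) + A := by
    intro m h
    rw [hcapdef]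
    simp only [if_pos h]
    exact max_le (hRmono m (m+1) (by omega) h) (by linarith)
  have hlam'le : ∀ m, m < n → lam' m ≤ rho m := by
    intro m hm
    rw [hlam'def]
    by_cases h : m = 0
    · simp only [if_pos h, h]
      exact le_trans (hlamL 0 (by omega)) (le_trans (by linarith) (hrhoR 0 (by omega)))
    · simp only [if_neg h]
      apply max_le
      · exact le_trans (hlamL m hm) (le_trans (by linarith) (hrhoR m hm))
      · have h1 : (m-1) + 1 = m := by omega
        have h2 : m - 1 + 1 < n := by omega
        calc rho (m-1) ≤ cap (m-1) := hrhocap (m-1) (by omega)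
        _ ≤ β (m-1+1) + A := hcapR (m-1) h2
        _ = β m + A := by rw [h1]
        _ ≤ rho m := hrhoR m hm
  have hchain : ∀ m, m + 1 < n → rho m ≤ lam' (m+1) := by
    intro m h
    rw [hlam'def]
    simp only [Nat.add_sub_cancel, if_neg (Nat.succ_ne_zero m)]
    exact le_max_right _ _
  have hfE : ∀ m, m < n → ∀ t, lam' m ≤ t → t ≤ rho m → 1 ≤ ff n δ β A t := by
    intro m hm t h1 h2
    rcases le_total t (β m - A) with h | h
    · exact hlamS m hm t (le_trans (hlam'lam m) h1) h
    · rcases le_total t (β m + A) with h' | h'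
      · exact ff_ge_one hm h h'
      · exact hrhoS m hm t h' h2
  have hconvf : ∀ (s : Set ℝ), Convex ℝ s →
      (∀ j, j < n → (∀ t ∈ s, t ≤ β j - A) ∨ (∀ t ∈ s, β j + A ≤ t)) →
      ConvexOn ℝ s (ff n δ β A) := by
    intro s hs hj
    apply convexOn_sum _ _ hs
    intro j hjmem
    have hjn : j < n := Finset.mem_range.mp hjmem
    rcases hj j hjn with h | h
    · exact convexOn_congr (convexOn_exp_affine s hs (δ j) (-(δ j) * (β j - A)))
        (fun t ht => Wf_left (h t ht) hA)
    · exact convexOn_congr (convexOn_exp_affine s hs (-(δ j)) (δ j * (β j + A)))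
        (fun t ht => Wf_right (h t ht) hA)
  have hsand : ∀ (p q : ℝ),
      (∀ j, j < n → (∀ t ∈ Icc p q, t ≤ β j - A) ∨ (∀ t ∈ Icc p q, β j + A ≤ t)) →
      ∀ t0 u t, t0 ∈ Icc p q → t ∈ Icc p q → t0 ≤ u → u ≤ t →
      ff n δ β A t0 < 1 → 1 ≤ ff n δ β A u → 1 ≤ ff n δ β A t := by
    intro p q hj t0 u t ht0 ht h0u hut hf0 hfu
    by_contra hft
    push_neg at hft
    have hconv := hconvf (Icc p q) (convex_Icc p q) hj
    have hseg : u ∈ segment ℝ t0 t := by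
      rw [segment_eq_Icc (le_trans h0u hut)]
      exact ⟨h0u, hut⟩
    have := hconv.le_on_segment ht0 ht hseg
    have hmax : ff n δ β A t0 ⊔ ff n δ β A t < 1 := sup_lt_iff.mpr ⟨hf0, hft⟩
    linarith [lt_of_le_of_lt this hmax]
  have hcov : ∀ u, 1 ≤ ff n δ β A u → ∃ i < n, lam' i ≤ u ∧ u ≤ rho i := by
    intro u hu
    by_cases hI : ∃ m, m < n ∧ β m - A ≤ u ∧ u ≤ β m + A
    · set m0 := Nat.find hI with hm0def
      obtain ⟨hm0n, hm0L, hm0R⟩ : m0 < n ∧ β m0 - A ≤ u ∧ u ≤ β m0 + A := Nat.find_spec hI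
      refine ⟨m0, hm0n, ?_, le_trans hm0R (hrhoR m0 hm0n)⟩
      rw [hlam'def]
      by_cases h0 : m0 = 0
      · simp only [if_pos h0]
        rw [← h0]
        linarith [hlamL m0 hm0n]
      · simp only [if_neg h0]
        apply max_le
        · linarith [hlamL m0 hm0n]
        · have hm1n : m0 - 1 < n := by omega
          have hnotP := Nat.find_min hI (show m0 - 1 < m0 by omega)
          have hL1 : β (m0-1) - A ≤ u :=
            le_trans (hLmono (m0-1) m0 (by omega) hm0n) hm0L
          have hR1 : β (m0-1) + A < u := by
            by_contra hcon
            push_neg at hcon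
            exact hnotP ⟨hm1n, hL1, hcon⟩
          have hcapu : cap (m0-1) ≤ u := by
            rw [hcapdef]
            simp only [if_pos (show m0-1+1 < n by omega)]
            apply max_le
            · linarith
            · rw [show m0-1+1 = m0 by omega]
              linarith
          linarith [hrhocap (m0-1) hm1n]
    · push_neg at hI
      by_cases hu0 : u < β 0 - A
      · have hxLou : xLo < u := by
          by_contra hcon
          push_neg at hcon
          linarith [hxLo u hcon]
        refine ⟨0, by omega, ?_, ?_⟩
        · rw [hlam'def]
          simp only [if_pos rfl]
          apply csInf_le (hTLbdd 0)
          refine ⟨⟨?_, le_of_lt hu0⟩, ?_⟩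
          · rw [hflodef]
            simp only [if_pos rfl]
            exact le_trans (min_le_right _ _) (le_of_lt hxLou)
          · intro t ht
            have hside : ∀ j, j < n → (∀ t ∈ Icc xLo (β 0 - A), t ≤ β j - A)
                ∨ (∀ t ∈ Icc xLo (β 0 - A), β j + A ≤ t) := by
              intro j hj
              left
              intro s hs
              exact le_trans hs.2 (hLmono 0 j (by omega) hj)
            have hf0 : ff n δ β A xLo < 1 :=
              lt_of_le_of_lt (hxLo xLo le_rfl) (by norm_num)
            exact hsand xLo (β 0 - A) hside xLo u t
              ⟨le_rfl, hxLoL 0 (by omega)⟩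
              ⟨le_trans (le_of_lt hxLou) ht.1, ht.2⟩
              (le_of_lt hxLou) ht.1 hf0 hu
        · have h1 : β 0 - A ≤ β 0 + A := by linarith
          exact le_trans (le_of_lt hu0) (le_trans h1 (hrhoR 0 (by omega)))
      · push_neg at hu0
        set m1 := Nat.findGreatest (fun m => β m - A ≤ u) (n-1) with hm1def
        have hm1P : β m1 - A ≤ u := by
          rw [hm1def]
          exact Nat.findGreatest_spec (P := fun m => β m - A ≤ u) (Nat.zero_le _) hu0
        have hm1le : m1 ≤ n - 1 := Nat.findGreatest_le _
        have hm1n : m1 < n := by omega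
        have hm1R : β m1 + A < u := hI m1 hm1n hm1P
        have hlam'u : lam' m1 ≤ u := by
          rw [hlam'def]
          by_cases h0 : m1 = 0
          · simp only [if_pos h0]
            rw [← h0]
            linarith [hlamL m1 hm1n]
          · simp only [if_neg h0]
            apply max_le
            · linarith [hlamL m1 hm1n]
            · calc rho (m1-1) ≤ cap (m1-1) := hrhocap (m1-1) (by omega)
                _ ≤ β (m1-1+1) + A := hcapR (m1-1) (by omega)
                _ = β m1 + A := by rw [show m1-1+1 = m1 by omega]
                _ ≤ u := le_of_lt hm1R
        by_cases hlast : m1 + 1 < n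
        · have hgapU : u < β (m1+1) - A := by
            by_contra hcon
            push_neg at hcon
            exact Nat.findGreatest_is_greatest (lt_add_one m1) (by omega) hcon
          have hside : ∀ j, j < n → (∀ t ∈ Icc (β m1 + A) (β (m1+1) - A), t ≤ β j - A)
              ∨ (∀ t ∈ Icc (β m1 + A) (β (m1+1) - A), β j + A ≤ t) := by
            intro j hj
            rcases le_or_gt j m1 with hjm | hjm
            · right; intro t ht; exact le_trans (hRmono j m1 hjm hm1n) ht.1
            · left; intro t ht; exact le_trans ht.2 (hLmono (m1+1) j hjm hj)
          rcases le_or_gt u (rho m1) with hur | hur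
          · exact ⟨m1, hm1n, hlam'u, hur⟩
          · have h1 : β (m1+1) - A ≤ β (m1+1) + A := by linarith
            refine ⟨m1+1, hlast, ?_,
              le_trans (le_of_lt hgapU) (le_trans h1 (hrhoR (m1+1) hlast))⟩
            rw [hlam'def]
            simp only [Nat.add_sub_cancel, if_neg (Nat.succ_ne_zero m1)]
            apply max_le _ (le_of_lt hur)
            apply csInf_le (hTLbdd (m1+1))
            refine ⟨⟨?_, le_of_lt hgapU⟩, ?_⟩
            · rw [hflodef]
              simp only [if_neg (Nat.succ_ne_zero m1), Nat.add_sub_cancel]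
              exact le_trans (min_le_right _ _) (le_of_lt hm1R)
            · have hucap : u ≤ cap m1 := by
                rw [hcapdef]
                simp only [if_pos hlast]
                exact le_trans (le_of_lt hgapU) (le_max_right _ _)
              have hnotT : u ∉ T m1 := fun hcon =>
                absurd (le_csSup (hTbdd m1) hcon) (not_le.mpr hur)
              have ht0 : ∃ t0 ∈ Icc (β m1 + A) u, ff n δ β A t0 < 1 := by
                by_contra hcon
                push_neg at hcon
                exact hnotT ⟨⟨le_of_lt hm1R, hucap⟩, fun t ht => hcon t ht⟩
              obtain ⟨t0, ht0m, ht0f⟩ := ht0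
              intro t ht
              exact hsand (β m1 + A) (β (m1+1) - A) hside t0 u t
                ⟨ht0m.1, le_trans ht0m.2 (le_of_lt hgapU)⟩
                ⟨le_trans (le_of_lt hm1R) ht.1, ht.2⟩
                ht0m.2 ht.1 ht0f hu
        · have hxHiu : u < xHi := by
            by_contra hcon
            push_neg at hcon
            linarith [hxHi u hcon]
          have hside : ∀ j, j < n → (∀ t ∈ Icc (β m1 + A) xHi, t ≤ β j - A)
              ∨ (∀ t ∈ Icc (β m1 + A) xHi, β j + A ≤ t) := by
            intro j hj
            right
            intro t ht
            exact le_trans (hRmono j m1 (by omega) hm1n) ht.1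
          rcases le_or_gt u (rho m1) with hur | hur
          · exact ⟨m1, hm1n, hlam'u, hur⟩
          · exfalso
            have hucap : u ≤ cap m1 := by
              rw [hcapdef]
              simp only [if_neg hlast]
              exact le_trans (le_of_lt hxHiu) (le_max_right _ _)
            have hnotT : u ∉ T m1 := fun hcon =>
              absurd (le_csSup (hTbdd m1) hcon) (not_le.mpr hur)
            have ht0 : ∃ t0 ∈ Icc (β m1 + A) u, ff n δ β A t0 < 1 := by
              by_contra hcon
              push_neg at hcon
              exact hnotT ⟨⟨le_of_lt hm1R, hucap⟩, fun t ht => hcon t ht⟩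
            obtain ⟨t0, ht0m, ht0f⟩ := ht0
            have hfin : 1 ≤ ff n δ β A xHi :=
              hsand (β m1 + A) xHi hside t0 u xHi
                ⟨ht0m.1, le_trans ht0m.2 (le_of_lt hxHiu)⟩
                ⟨hxHiR m1 hm1n, le_rfl⟩
                ht0m.2 (le_of_lt hxHiu) ht0f hu
            linarith [hxHi xHi le_rfl]
  have hWint : ∀ j (x y : ℝ), IntervalIntegrable (Wf δ β A j) MeasureTheory.volume x y :=
    fun j x y => (Wf_cont j).intervalIntegrable (μ := MeasureTheory.volume) x y
  have hlen : ∀ m, m < n →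
      rho m - lam' m ≤ ∑ j ∈ Finset.range n, ∫ t in (lam' m)..(rho m), Wf δ β A j t := by
    intro m hm
    have h0 : rho m - lam' m = ∫ t in (lam' m)..(rho m), (1:ℝ) := by
      simp
    rw [h0, ← intervalIntegral.integral_finset_sum (fun j _ => hWint j _ _)]
    apply intervalIntegral.integral_mono_on (hlam'le m hm)
      (intervalIntegrable_const :
        IntervalIntegrable (fun _ => (1:ℝ)) MeasureTheory.volume (lam' m) (rho m))
      (ff_cont.intervalIntegrable (μ := MeasureTheory.volume) _ _)
    intro x hx
    exact hfE m hm x hx.1 hx.2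
  have hrho_mono : ∀ m, m + 1 < n → rho m ≤ rho (m+1) :=
    fun m h => le_trans (hchain m h) (hlam'le (m+1) h)
  have hlam0rho : ∀ m, m < n → lam' 0 ≤ rho m := by
    intro m
    induction m with
    | zero => exact fun h => hlam'le 0 h
    | succ m ih =>
      intro h
      exact le_trans (ih (by omega)) (hrho_mono m h)
  have hsum_chain : ∀ j, ∑ m ∈ Finset.range n, ∫ t in (lam' m)..(rho m), Wf δ β A j t
      ≤ ∫ t in (lam' 0)..(rho (n-1)), Wf δ β A j t := by
    intro j
    have aux : ∀ M, 1 ≤ M → M ≤ n →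
        (∑ m ∈ Finset.range M, ∫ t in (lam' m)..(rho m), Wf δ β A j t)
          ≤ ∫ t in (lam' 0)..(rho (M-1)), Wf δ β A j t := by
      intro M
      induction M with
      | zero => omega
      | succ M ih =>
        intro h1 h2
        rcases Nat.lt_or_ge 1 (M+1) with h | h
        · have hM1 : 1 ≤ M := by omega
          have hMlt : M < n := by omega
          have e1 := ih hM1 (le_of_lt hMlt)
          rw [Finset.sum_range_succ]
          have hM0 : (M-1)+1 = M := by omega
          have hc : rho (M-1) ≤ lam' M := by
            have := hchain (M-1) (by omega)
            rwa [hM0] at this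
          have hadj1 : (∫ t in (lam' 0)..(rho (M-1)), Wf δ β A j t)
              + (∫ t in (rho (M-1))..(lam' M), Wf δ β A j t)
              = ∫ t in (lam' 0)..(lam' M), Wf δ β A j t :=
            intervalIntegral.integral_add_adjacent_intervals (hWint j _ _) (hWint j _ _)
          have hadj2 : (∫ t in (lam' 0)..(lam' M), Wf δ β A j t)
              + (∫ t in (lam' M)..(rho M), Wf δ β A j t)
              = ∫ t in (lam' 0)..(rho M), Wf δ β A j t :=
            intervalIntegral.integral_add_adjacent_intervals (hWint j _ _) (hWint j _ _)
          have hnn : 0 ≤ ∫ t in (rho (M-1))..(lam' M), Wf δ β A j t :=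
            intervalIntegral.integral_nonneg hc (fun u _ => Wf_nonneg j u)
          have : (M+1)-1 = M := by omega
          rw [this]
          linarith
        · have hM0 : M = 0 := by omega
          subst hM0
          simp
    exact aux n hn le_rfl
  refine ⟨lam', fun i => if i < n then rho i - lam' i else 0, ?_, ?_, ?_⟩
  · intro i
    by_cases h : i < n
    · simp only [if_pos h]
      linarith [hlam'le i h]
    · simp [h]
  · have e1 : ∑ i ∈ Finset.range n, (if i < n then rho i - lam' i else 0)
        = ∑ i ∈ Finset.range n, (rho i - lam' i) := by
      apply Finset.sum_congr rfl
      intro i hi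
      rw [if_pos (Finset.mem_range.mp hi)]
    rw [e1]
    calc ∑ i ∈ Finset.range n, (rho i - lam' i)
        ≤ ∑ i ∈ Finset.range n, ∑ j ∈ Finset.range n, ∫ t in (lam' i)..(rho i), Wf δ β A j t := by
          apply Finset.sum_le_sum
          intro i hi
          exact hlen i (Finset.mem_range.mp hi)
    _ = ∑ j ∈ Finset.range n, ∑ i ∈ Finset.range n, ∫ t in (lam' i)..(rho i), Wf δ β A j t :=
          Finset.sum_comm
    _ ≤ ∑ j ∈ Finset.range n, ∫ t in (lam' 0)..(rho (n-1)), Wf δ β A j t :=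
          Finset.sum_le_sum (fun j _ => hsum_chain j)
    _ ≤ ∑ j ∈ Finset.range n, (2*A + 2/δ j) := by
          apply Finset.sum_le_sum
          intro j hj
          exact Wf_integral_le (hδ j (Finset.mem_range.mp hj)) hA (hlam0rho (n-1) (by omega))
  · intro u hu
    obtain ⟨i, hi, h1, h2⟩ := hcov u hu
    exact ⟨i, hi, h1, by simp only [if_pos hi]; linarith⟩

lemma continuous_finset_sup' {ι : Type*} : ∀ (s : Finset ι) (hs : s.Nonempty) (f : ι → ℝ → ℝ),
    (∀ i ∈ s, Continuous (f i)) → Continuous (fun u => s.sup' hs (fun i => f i u)) := by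
  intro s
  induction s using Finset.cons_induction with
  | empty => intro hs; exact absurd hs (by simp)
  | cons b s hb ih =>
    intro hs f hf
    rcases s.eq_empty_or_nonempty with rfl | hne
    · simpa using hf b (by simp)
    · simp only [Finset.sup'_cons hne]
      exact (hf b (by simp)).max (ih hne f (fun i hi => hf i (by simp [hi])))

end Stmt4Aux



open Stmt4Aux

/-- For `y(z) = Σ_{j<k} a_j e^{λ_j z}` with simple exponents of increasing
real parts and nonzero coefficients, the complement in the strip `Π_α` of the domain of
single-term dominance can be covered by at most `k−1` boxes of height `2α` of total width
at most `2α(k−1)Ξ + 2(k−1)Θ ln 4`. -/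
theorem stmt_4 (k : ℕ) (hk : 2 ≤ k) (l : ℕ → ℂ)
    (hmono : ∀ j, j + 1 < k → (l j).re < (l (j + 1)).re)
    (a : ℕ → ℂ) (ha : ∀ j < k, a j ≠ 0)
    (Θ Ξ : ℝ)
    (hΘ : Θ = (Finset.range (k - 1)).sup' (Finset.nonempty_range_iff.mpr (by omega))
      fun j => ((l (j + 1)).re - (l j).re)⁻¹)
    (hΞ : Ξ = (Finset.range (k - 1)).sup' (Finset.nonempty_range_iff.mpr (by omega))
      fun j => |(l (j + 1)).im - (l j).im| / ((l (j + 1)).re - (l j).re))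
    (α : ℝ) (hα : 0 ≤ α) :
    ∃ (N : ℕ) (c w : ℕ → ℝ), N ≤ k - 1 ∧ (∀ i, 0 ≤ w i) ∧
      (∑ i ∈ Finset.range N, w i) ≤
        2 * α * ((k : ℝ) - 1) * Ξ + 2 * ((k : ℝ) - 1) * Θ * Real.log 4 ∧
      ∀ z : ℂ, |z.im| ≤ α →
        (¬ ∃ j < k, ∃ ε : ℝ, 0 < ε ∧
          (1 + ε) * ∑ i ∈ (Finset.range k).erase j,
              ‖a i * Complex.exp (l i * z)‖
            ≤ ‖a j * Complex.exp (l j * z)‖) →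
        ∃ i < N, c i ≤ z.re ∧ z.re ≤ c i + w i := by
  classical
  obtain ⟨n, rfl⟩ : ∃ n, k = n + 1 := ⟨k - 1, by omega⟩
  have hn : 1 ≤ n := by omega
  simp only [Nat.add_sub_cancel] at hΘ hΞ
  set δm : ℕ → ℝ := fun m => (l (m+1)).re - (l m).re with hδdef
  have hδpos : ∀ m, m < n → 0 < δm m := fun m hm => sub_pos.mpr (hmono m (by omega))
  have hΘge : ∀ m, m < n → (δm m)⁻¹ ≤ Θ := by
    intro m hm
    rw [hΘ]
    exact Finset.le_sup' (fun x => ((l (x + 1)).re - (l x).re)⁻¹) (Finset.mem_range.mpr hm)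
  have hΘpos : 0 < Θ := lt_of_lt_of_le (inv_pos.mpr (hδpos 0 hn)) (hΘge 0 hn)
  have hΞge : ∀ m, m < n → |(l (m+1)).im - (l m).im| ≤ Ξ * δm m := by
    intro m hm
    have h1 : |(l (m+1)).im - (l m).im| / δm m ≤ Ξ := by
      rw [hΞ]
      exact Finset.le_sup' (fun x => |(l (x + 1)).im - (l x).im| / ((l (x + 1)).re - (l x).re))
        (Finset.mem_range.mpr hm)
    have h2 := hδpos m hm
    calc |(l (m+1)).im - (l m).im| = (|(l (m+1)).im - (l m).im| / δm m) * δm m := by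
          field_simp
    _ ≤ Ξ * δm m := mul_le_mul_of_nonneg_right h1 (le_of_lt h2)
  have hΞ0 : 0 ≤ Ξ := by
    have h1 : (0:ℝ) ≤ |(l (0+1)).im - (l 0).im| / δm 0 :=
      div_nonneg (abs_nonneg _) (le_of_lt (hδpos 0 hn))
    have h2 : |(l (0+1)).im - (l 0).im| / δm 0 ≤ Ξ := by
      rw [hΞ]
      exact Finset.le_sup' (fun x => |(l (x + 1)).im - (l x).im| / ((l (x + 1)).re - (l x).re))
        (Finset.mem_range.mpr hn)
    linarith
  have hre : ∀ i d, i + d ≤ n → (l i).re ≤ (l (i + d)).re := by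
    intro i d
    induction d with
    | zero => intro _; simp
    | succ d ih =>
      intro h
      have h1 := ih (by omega)
      have h2 : (l (i+d)).re < (l (i+d+1)).re := hmono (i+d) (by omega)
      have e : i + (d+1) = i + d + 1 := by omega
      rw [e]
      linarith
  have hre_mono : ∀ i j, i ≤ j → j ≤ n → (l i).re ≤ (l j).re := by
    intro i j hij hj
    have := hre i (j - i) (by omega)
    rwa [show i + (j-i) = j by omega] at this
  have hre_lt : ∀ i j, i < j → j ≤ n → (l i).re < (l j).re := by
    intro i j hij hj
    have h1 := hre_mono (i+1) j (by omega) hj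
    have h2 := hmono i (by omega)
    linarith
  have him : ∀ i d, i + d ≤ n → |(l (i+d)).im - (l i).im| ≤ Ξ * ((l (i+d)).re - (l i).re) := by
    intro i d
    induction d with
    | zero => intro _; simp
    | succ d ih =>
      intro h
      have h1 := ih (by omega)
      have h2 := hΞge (i+d) (by omega)
      simp only [hδdef] at h2
      have e : i + (d+1) = i + d + 1 := by omega
      rw [e]
      have htri : |(l (i+d+1)).im - (l i).im| ≤
          |(l (i+d+1)).im - (l (i+d)).im| + |(l (i+d)).im - (l i).im| := abs_sub_le _ _ _
      linarith
  have him_mono : ∀ i j, i ≤ j → j ≤ n → |(l j).im - (l i).im| ≤ Ξ * ((l j).re - (l i).re) := by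
    intro i j hij hj
    have := him i (j - i) (by omega)
    rwa [show i + (j-i) = j by omega] at this
  set Hf : ℕ → ℝ → ℝ → ℝ :=
    fun j u v => Real.log ‖a j‖ + ((l j).re * u - (l j).im * v) with hHdef
  have habs : ∀ j, j < n + 1 → ∀ z : ℂ,
      ‖a j * Complex.exp (l j * z)‖ = Real.exp (Hf j z.re z.im) := by
    intro j hj z
    rw [norm_mul, Complex.norm_exp, hHdef]
    simp only []
    rw [Real.exp_add, Real.exp_log (norm_pos_iff.mpr (ha j hj)), Complex.mul_re]
  set Top : ℕ → ℝ → ℝ → ℝ := fun m u v => (Finset.Icc (min (m+1) n) n).sup'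
    (Finset.nonempty_Icc.mpr (min_le_right _ _)) (fun j => Hf j u v) with hTopdef
  set Bot : ℕ → ℝ → ℝ → ℝ := fun m u v => (Finset.range (m+1)).sup'
    (Finset.nonempty_range_iff.mpr (Nat.succ_ne_zero m)) (fun j => Hf j u v) with hBotdef
  set F : ℕ → ℝ → ℝ → ℝ := fun m u v => Top m u v - Bot m u v with hFdef
  have hTople : ∀ (m : ℕ) (u v x : ℝ), (∀ j, min (m+1) n ≤ j → j ≤ n → Hf j u v ≤ x) →
      Top m u v ≤ x := by
    intro m u v x hj
    rw [hTopdef]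
    apply Finset.sup'_le
    intro j hjm
    rw [Finset.mem_Icc] at hjm
    exact hj j hjm.1 hjm.2
  have hTopge : ∀ (m : ℕ) (u v : ℝ) (j : ℕ), min (m+1) n ≤ j → j ≤ n →
      Hf j u v ≤ Top m u v := by
    intro m u v j h1 h2
    simp only [hTopdef]
    exact Finset.le_sup' (fun j => Hf j u v) (Finset.mem_Icc.mpr ⟨h1, h2⟩)
  have hBotle : ∀ (m : ℕ) (u v x : ℝ), (∀ j, j < m+1 → Hf j u v ≤ x) → Bot m u v ≤ x := by
    intro m u v x hj
    rw [hBotdef]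
    apply Finset.sup'_le
    intro j hjm
    exact hj j (Finset.mem_range.mp hjm)
  have hBotge : ∀ (m : ℕ) (u v : ℝ) (j : ℕ), j < m+1 → Hf j u v ≤ Bot m u v := by
    intro m u v j h1
    simp only [hBotdef]
    exact Finset.le_sup' (fun j => Hf j u v) (Finset.mem_range.mpr h1)
  have hTopmem : ∀ (m : ℕ) (u v : ℝ), ∃ q, min (m+1) n ≤ q ∧ q ≤ n ∧ Top m u v = Hf q u v := by
    intro m u v
    obtain ⟨q, hq, he⟩ := Finset.exists_mem_eq_sup'
      (Finset.nonempty_Icc.mpr (min_le_right (m+1) n)) (fun j => Hf j u v)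
    rw [Finset.mem_Icc] at hq
    exact ⟨q, hq.1, hq.2, by rw [hTopdef]; exact he⟩
  have hBotmem : ∀ (m : ℕ) (u v : ℝ), ∃ p, p < m+1 ∧ Bot m u v = Hf p u v := by
    intro m u v
    obtain ⟨p, hp, he⟩ := Finset.exists_mem_eq_sup'
      (Finset.nonempty_range_iff.mpr (Nat.succ_ne_zero m)) (fun j => Hf j u v)
    exact ⟨p, Finset.mem_range.mp hp, by rw [hBotdef]; exact he⟩
  have hgrow : ∀ m, m < n → ∀ (v u1 u2 : ℝ), u1 ≤ u2 →
      F m u1 v + δm m * (u2 - u1) ≤ F m u2 v := by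
    intro m hm v u1 u2 h12
    obtain ⟨q, hq1, hq2, hqe⟩ := hTopmem m u1 v
    have hq1' : m + 1 ≤ q := by omega
    have hTop2 : Top m u1 v + (l (m+1)).re * (u2 - u1) ≤ Top m u2 v := by
      have e1 : Hf q u2 v = Hf q u1 v + (l q).re * (u2 - u1) := by
        rw [hHdef]; ring
      have e2 : (l (m+1)).re ≤ (l q).re := hre_mono (m+1) q hq1' hq2
      have e3 := hTopge m u2 v q hq1 hq2
      have e4 := mul_le_mul_of_nonneg_right e2 (show (0:ℝ) ≤ u2 - u1 by linarith)
      calc Top m u1 v + (l (m+1)).re * (u2-u1) = Hf q u1 v + (l (m+1)).re*(u2-u1) := by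
            rw [hqe]
      _ ≤ Hf q u1 v + (l q).re*(u2-u1) := by linarith
      _ = Hf q u2 v := e1.symm
      _ ≤ Top m u2 v := e3
    have hBot2 : Bot m u2 v ≤ Bot m u1 v + (l m).re * (u2 - u1) := by
      apply hBotle
      intro j hjm
      have e1 : Hf j u2 v = Hf j u1 v + (l j).re * (u2-u1) := by rw [hHdef]; ring
      have e2 : (l j).re ≤ (l m).re := hre_mono j m (by omega) (by omega)
      have e3 := hBotge m u1 v j hjm
      have e4 := mul_le_mul_of_nonneg_right e2 (show (0:ℝ) ≤ u2 - u1 by linarith)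
      rw [e1]
      linarith
    have hδe : δm m = (l (m+1)).re - (l m).re := by rw [hδdef]
    simp only [hFdef]
    rw [hδe]
    linarith
  have hFanti : ∀ m m', m ≤ m' → m' < n → ∀ u v, F m' u v ≤ F m u v := by
    intro m m' hmm hm' u v
    have hT : Top m' u v ≤ Top m u v := by
      apply hTople
      intro j h1 h2
      exact hTopge m u v j (by omega) h2
    have hB : Bot m u v ≤ Bot m' u v := by
      apply hBotle
      intro j h1
      exact hBotge m' u v j (by omega)
    simp only [hFdef]
    linarith
  have hHcont : ∀ (j : ℕ) (v : ℝ), Continuous fun u => Hf j u v := by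
    intro j v
    rw [hHdef]
    fun_prop
  have hFcont : ∀ m, Continuous fun u => F m u 0 := by
    intro m
    simp only [hFdef, hTopdef, hBotdef]
    exact (continuous_finset_sup' _ _ _ (fun j _ => hHcont j 0)).sub
      (continuous_finset_sup' _ _ _ (fun j _ => hHcont j 0))
  have hroot : ∀ m, m < n → ∃ b : ℝ, F m b 0 = 0 := by
    intro m hm
    have hd := hδpos m hm
    set c := F m 0 0 with hc
    set u2 := (|c| + 1) / δm m with hu2
    have hu2pos : 0 ≤ u2 := by positivity
    have h2 : 0 < F m u2 0 := by
      have hg := hgrow m hm 0 0 u2 hu2pos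
      have e : δm m * (u2 - 0) = |c| + 1 := by
        rw [hu2]; field_simp; ring
      rw [e] at hg
      have := neg_abs_le c
      rw [← hc] at hg
      linarith
    have h1 : F m (-u2) 0 < 0 := by
      have hg := hgrow m hm 0 (-u2) 0 (by linarith)
      have e : δm m * (0 - -u2) = |c| + 1 := by
        rw [hu2]; field_simp; ring
      rw [e] at hg
      have := le_abs_self c
      rw [← hc] at hg
      linarith
    have hle : -u2 ≤ u2 := by linarith
    have hIvt := intermediate_value_Icc hle (hFcont m).continuousOn
    obtain ⟨b, _, hb⟩ := hIvt ⟨le_of_lt h1, le_of_lt h2⟩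
    exact ⟨b, hb⟩
  set βf : ℕ → ℝ := fun m => if h : m < n then Classical.choose (hroot m h) else 0 with hβdef
  have hβ0 : ∀ m, m < n → F m (βf m) 0 = 0 := by
    intro m hm
    have : βf m = Classical.choose (hroot m hm) := by
      rw [hβdef]; simp only [dif_pos hm]
    rw [this]
    exact Classical.choose_spec (hroot m hm)
  have hβmono : ∀ m m', m ≤ m' → m' < n → βf m ≤ βf m' := by
    intro m m' hmm hm'
    by_contra hcon
    push_neg at hcon
    have h1 := hgrow m (by omega) 0 (βf m') (βf m) (le_of_lt hcon)
    rw [hβ0 m (by omega)] at h1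
    have h2 : F m' (βf m') 0 ≤ F m (βf m') 0 := hFanti m m' hmm hm' _ _
    rw [hβ0 m' hm'] at h2
    have h3 : 0 < δm m * (βf m - βf m') := mul_pos (hδpos m (by omega)) (by linarith)
    linarith
  have hshift_pos : ∀ m, m < n → ∀ (u u' v : ℝ), 0 ≤ F m u 0 → u + Ξ * |v| ≤ u' →
      0 ≤ F m u' v := by
    intro m hm u u' v hF0 hshift
    obtain ⟨q, hq1, hq2, hqe⟩ := hTopmem m u 0
    have hq1' : m + 1 ≤ q := by omega
    have hkey : ∀ i, i < m + 1 → Hf i u' v ≤ Hf q u' v := by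
      intro i hi
      have h1 : Hf i u 0 ≤ Hf q u 0 := by
        have hb := hBotge m u 0 i hi
        simp only [hFdef] at hF0
        rw [← hqe]
        linarith
      have hgap : 0 < (l q).re - (l i).re := by
        have := hre_lt i q (by omega) hq2
        linarith
      have hIm : |(l q).im - (l i).im| ≤ Ξ * ((l q).re - (l i).re) :=
        him_mono i q (by omega) hq2
      have he : Hf q u' v - Hf i u' v = (Hf q u 0 - Hf i u 0)
          + ((l q).re - (l i).re) * (u' - u) - ((l q).im - (l i).im) * v := by
        rw [hHdef]; ring
      have hv : ((l q).im - (l i).im) * v ≤ Ξ * ((l q).re - (l i).re) * |v| := by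
        calc ((l q).im - (l i).im) * v ≤ |((l q).im - (l i).im) * v| := le_abs_self _
        _ = |(l q).im - (l i).im| * |v| := abs_mul _ _
        _ ≤ Ξ * ((l q).re - (l i).re) * |v| :=
              mul_le_mul_of_nonneg_right hIm (abs_nonneg v)
      have hu' : Ξ * |v| ≤ u' - u := by linarith
      have hprod : ((l q).re - (l i).re) * (Ξ * |v|) ≤ ((l q).re - (l i).re) * (u' - u) :=
        mul_le_mul_of_nonneg_left hu' (le_of_lt hgap)
      have he2 : Ξ * ((l q).re - (l i).re) * |v| = ((l q).re - (l i).re) * (Ξ * |v|) := by ring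
      rw [he2] at hv
      linarith
    have hB : Bot m u' v ≤ Hf q u' v := hBotle m u' v _ hkey
    have hT : Hf q u' v ≤ Top m u' v := hTopge m u' v q hq1 hq2
    simp only [hFdef]
    linarith
  have hshift_neg : ∀ m, m < n → ∀ (u u' v : ℝ), F m u 0 ≤ 0 → u' ≤ u - Ξ * |v| →
      F m u' v ≤ 0 := by
    intro m hm u u' v hF0 hshift
    obtain ⟨p, hp, hpe⟩ := hBotmem m u 0
    have hkey : ∀ j, min (m+1) n ≤ j → j ≤ n → Hf j u' v ≤ Hf p u' v := by
      intro j h1j h2j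
      have hj' : m + 1 ≤ j := by omega
      have h1 : Hf j u 0 ≤ Hf p u 0 := by
        have ht := hTopge m u 0 j h1j h2j
        simp only [hFdef] at hF0
        rw [← hpe]
        linarith
      have hgap : 0 < (l j).re - (l p).re := by
        have := hre_lt p j (by omega) h2j
        linarith
      have hIm : |(l j).im - (l p).im| ≤ Ξ * ((l j).re - (l p).re) :=
        him_mono p j (by omega) h2j
      have he : Hf p u' v - Hf j u' v = (Hf p u 0 - Hf j u 0)
          + ((l j).re - (l p).re) * (u - u') - ((l p).im - (l j).im) * v := by
        rw [hHdef]; ring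
      have hv : ((l p).im - (l j).im) * v ≤ Ξ * ((l j).re - (l p).re) * |v| := by
        calc ((l p).im - (l j).im) * v ≤ |((l p).im - (l j).im) * v| := le_abs_self _
        _ = |(l p).im - (l j).im| * |v| := abs_mul _ _
        _ = |(l j).im - (l p).im| * |v| := by rw [abs_sub_comm]
        _ ≤ Ξ * ((l j).re - (l p).re) * |v| :=
              mul_le_mul_of_nonneg_right hIm (abs_nonneg v)
      have hu' : Ξ * |v| ≤ u - u' := by linarith
      have hprod : ((l j).re - (l p).re) * (Ξ * |v|) ≤ ((l j).re - (l p).re) * (u - u') :=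
        mul_le_mul_of_nonneg_left hu' (le_of_lt hgap)
      have he2 : Ξ * ((l j).re - (l p).re) * |v| = ((l j).re - (l p).re) * (Ξ * |v|) := by ring
      rw [he2] at hv
      linarith
    have hT : Top m u' v ≤ Hf p u' v := hTople m u' v _ hkey
    have hB : Hf p u' v ≤ Bot m u' v := hBotge m u' v p hp
    simp only [hFdef]
    linarith
  have hA : (0:ℝ) ≤ α * Ξ := mul_nonneg hα hΞ0
  have hFabs : ∀ m, m < n → ∀ (u v : ℝ), |v| ≤ α →
      Real.exp (-|F m u v|) ≤ Wf δm βf (α*Ξ) m u := by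
    intro m hm u v hv
    have hΞv : Ξ * |v| ≤ α * Ξ := by
      have h1 := mul_le_mul_of_nonneg_left hv hΞ0
      linarith [h1, mul_comm Ξ α]
    have habsv : (0:ℝ) ≤ |v| := abs_nonneg v
    have hδ := hδpos m hm
    rcases le_or_gt (|u - βf m|) (α*Ξ) with hcase | hcase
    · rw [Wf_plateau (by cases abs_le.mp hcase with | intro h1 h2 => linarith)
        (by cases abs_le.mp hcase with | intro h1 h2 => linarith)]
      exact Real.exp_le_one_iff.mpr (neg_nonpos.mpr (abs_nonneg _))
    · rcases lt_or_ge (βf m) u with hside | hside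
      · have habs' : |u - βf m| = u - βf m := abs_of_pos (by linarith)
        rw [habs'] at hcase
        have h0 : 0 ≤ F m (βf m + Ξ*|v|) v :=
          hshift_pos m hm (βf m) _ v (hβ0 m hm).ge le_rfl
        have hg := hgrow m hm v (βf m + Ξ*|v|) u (by linarith)
        have hFge : δm m * (u - βf m - α*Ξ) ≤ F m u v := by nlinarith
        have hF2 : δm m * (u - βf m - α*Ξ) ≤ |F m u v| := le_trans hFge (le_abs_self _)
        show Real.exp (-|F m u v|) ≤ Real.exp (-(δm m) * max (|u - βf m| - α*Ξ) 0)
        rw [Real.exp_le_exp, habs', max_eq_left (by linarith)]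
        have e : -(δm m) * (u - βf m - α*Ξ) = -(δm m * (u - βf m - α*Ξ)) := by ring
        rw [e]
        linarith
      · have habs' : |u - βf m| = βf m - u := by
          rw [abs_of_nonpos (by linarith)]; ring
        rw [habs'] at hcase
        have h0 : F m (βf m - Ξ*|v|) v ≤ 0 :=
          hshift_neg m hm (βf m) _ v (hβ0 m hm).le le_rfl
        have hg := hgrow m hm v u (βf m - Ξ*|v|) (by linarith)
        have hFle : F m u v ≤ -(δm m * (βf m - α*Ξ - u)) := by nlinarith
        have hF2 : δm m * (βf m - α*Ξ - u) ≤ |F m u v| :=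
          le_trans (by linarith [neg_le_abs (F m u v)]) (le_refl _)
        have hF3 : δm m * (βf m - α*Ξ - u) ≤ |F m u v| := by
          have := neg_le_abs (F m u v)
          linarith
        show Real.exp (-|F m u v|) ≤ Real.exp (-(δm m) * max (|u - βf m| - α*Ξ) 0)
        rw [Real.exp_le_exp, habs', max_eq_left (by linarith)]
        have e : -(δm m) * (βf m - u - α*Ξ) = -(δm m * (βf m - α*Ξ - u)) := by ring
        rw [e]
        linarith
  have hbad : ∀ z : ℂ, |z.im| ≤ α →
      (¬ ∃ j < n + 1, ∃ ε : ℝ, 0 < ε ∧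
        (1 + ε) * ∑ i ∈ (Finset.range (n+1)).erase j,
            ‖a i * Complex.exp (l i * z)‖
          ≤ ‖a j * Complex.exp (l j * z)‖) →
      1 ≤ ff n δm βf (α*Ξ) z.re := by
    intro z hz hbadz
    push_neg at hbadz
    have hyp' : ∀ j, j < n+1 → ∀ ε : ℝ, 0 < ε →
        Real.exp (Hf j z.re z.im) <
          (1+ε) * ∑ i ∈ (Finset.range (n+1)).erase j, Real.exp (Hf i z.re z.im) := by
      intro j hj ε hε
      have h1 := hbadz j hj ε hε
      rw [habs j hj z] at h1
      have hSeq : ∑ i ∈ (Finset.range (n+1)).erase j,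
          ‖a i * Complex.exp (l i * z)‖
          = ∑ i ∈ (Finset.range (n+1)).erase j, Real.exp (Hf i z.re z.im) :=
        Finset.sum_congr rfl (fun i hi =>
          habs i (Finset.mem_range.mp (Finset.mem_of_mem_erase hi)) z)
      rwa [hSeq] at h1
    have hsum : ∀ j, j < n+1 →
        Real.exp (Hf j z.re z.im)
          ≤ ∑ i ∈ (Finset.range (n+1)).erase j, Real.exp (Hf i z.re z.im) := by
      intro j hj
      by_contra hcon
      push_neg at hcon
      set S := ∑ i ∈ (Finset.range (n+1)).erase j, Real.exp (Hf i z.re z.im) with hS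
      have hSpos : 0 < S := by
        apply Finset.sum_pos (fun i _ => Real.exp_pos _)
        by_cases hj0 : j = 0
        · refine ⟨1, ?_⟩
          rw [Finset.mem_erase, Finset.mem_range]
          omega
        · refine ⟨0, ?_⟩
          rw [Finset.mem_erase, Finset.mem_range]
          omega
      set t := Real.exp (Hf j z.re z.im) with ht
      have hε : 0 < (t - S)/S := div_pos (by linarith) hSpos
      have h2 := hyp' j hj _ hε
      have hS0 : S ≠ 0 := ne_of_gt hSpos
      have he : (1 + (t - S)/S) * S = t := by
        rw [add_mul, one_mul, div_mul_cancel₀ _ hS0]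
        ring
      rw [← ht, he] at h2
      exact lt_irrefl _ h2
    obtain ⟨j', hj'mem, hj'max⟩ := Finset.exists_max_image (Finset.range (n+1))
      (fun j => Hf j z.re z.im) ⟨0, by simp⟩
    have hj'n : j' < n + 1 := Finset.mem_range.mp hj'mem
    have hterm : ∀ i ∈ (Finset.range (n+1)).erase j',
        Real.exp (Hf i z.re z.im) ≤ Real.exp (Hf j' z.re z.im) *
          Real.exp (-|F (if i < j' then i else i - 1) z.re z.im|) := by
      intro i hi
      rw [Finset.mem_erase, Finset.mem_range] at hi
      obtain ⟨hij, hin⟩ := hi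
      rw [← Real.exp_add, Real.exp_le_exp]
      by_cases hlt : i < j'
      · simp only [if_pos hlt]
        have hFpos : 0 ≤ F i z.re z.im := by
          have hB : Bot i z.re z.im ≤ Hf j' z.re z.im :=
            hBotle i z.re z.im _ (fun jj hjj => hj'max jj (Finset.mem_range.mpr (by omega)))
          have hT : Hf j' z.re z.im ≤ Top i z.re z.im :=
            hTopge i z.re z.im j' (by omega) (by omega)
          simp only [hFdef]
          linarith
        have h1 : Hf i z.re z.im ≤ Bot i z.re z.im := hBotge i z.re z.im i (by omega)
        have h2 : Top i z.re z.im ≤ Hf j' z.re z.im :=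
          hTople i z.re z.im _ (fun jj h1' h2' => hj'max jj (Finset.mem_range.mpr (by omega)))
        rw [abs_of_nonneg hFpos]
        simp only [hFdef] at *
        linarith
      · simp only [if_neg hlt]
        have hij' : j' < i := by omega
        have hFneg : F (i-1) z.re z.im ≤ 0 := by
          have hT : Top (i-1) z.re z.im ≤ Hf j' z.re z.im :=
            hTople (i-1) z.re z.im _
              (fun jj h1' h2' => hj'max jj (Finset.mem_range.mpr (by omega)))
          have hB : Hf j' z.re z.im ≤ Bot (i-1) z.re z.im :=
            hBotge (i-1) z.re z.im j' (by omega)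
          simp only [hFdef]
          linarith
        have h1 : Hf i z.re z.im ≤ Top (i-1) z.re z.im :=
          hTopge (i-1) z.re z.im i (by omega) (by omega)
        have h2 : Bot (i-1) z.re z.im ≤ Hf j' z.re z.im :=
          hBotle (i-1) z.re z.im _ (fun jj hjj => hj'max jj (Finset.mem_range.mpr (by omega)))
        rw [abs_of_nonpos hFneg]
        simp only [hFdef] at *
        linarith
    have hstep1 : Real.exp (Hf j' z.re z.im) ≤
        Real.exp (Hf j' z.re z.im) * ∑ i ∈ (Finset.range (n+1)).erase j',
          Real.exp (-|F (if i < j' then i else i - 1) z.re z.im|) := by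
      calc Real.exp (Hf j' z.re z.im)
          ≤ ∑ i ∈ (Finset.range (n+1)).erase j', Real.exp (Hf i z.re z.im) := hsum j' hj'n
      _ ≤ ∑ i ∈ (Finset.range (n+1)).erase j', Real.exp (Hf j' z.re z.im) *
            Real.exp (-|F (if i < j' then i else i-1) z.re z.im|) := Finset.sum_le_sum hterm
      _ = _ := by rw [← Finset.mul_sum]
    have hinj : ∀ x ∈ (Finset.range (n+1)).erase j', ∀ y ∈ (Finset.range (n+1)).erase j',
        (if x < j' then x else x - 1) = (if y < j' then y else y - 1) → x = y := by
      intro x hx y hy hxy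
      rw [Finset.mem_erase, Finset.mem_range] at hx hy
      split_ifs at hxy <;> omega
    have hreindex : ∑ i ∈ (Finset.range (n+1)).erase j',
        Real.exp (-|F (if i < j' then i else i - 1) z.re z.im|)
        ≤ ∑ m ∈ Finset.range n, Real.exp (-|F m z.re z.im|) := by
      have hsi := Finset.sum_image (f := fun m => Real.exp (-|F m z.re z.im|))
        (g := fun i => if i < j' then i else i - 1) (s := (Finset.range (n+1)).erase j') hinj
      rw [← hsi]
      apply Finset.sum_le_sum_of_subset_of_nonneg
      · intro x hx
        rw [Finset.mem_image] at hx
        obtain ⟨i, hi, rfl⟩ := hx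
        rw [Finset.mem_erase, Finset.mem_range] at hi
        rw [Finset.mem_range]
        split_ifs <;> omega
      · intro i _ _
        positivity
    have hffge : ∑ m ∈ Finset.range n, Real.exp (-|F m z.re z.im|)
        ≤ ff n δm βf (α*Ξ) z.re := by
      apply Finset.sum_le_sum
      intro m hm
      exact hFabs m (Finset.mem_range.mp hm) z.re z.im hz
    have hEpos : 0 < Real.exp (Hf j' z.re z.im) := Real.exp_pos _
    have hfin : Real.exp (Hf j' z.re z.im)
        ≤ Real.exp (Hf j' z.re z.im) * ff n δm βf (α*Ξ) z.re :=
      le_trans hstep1 (mul_le_mul_of_nonneg_left (le_trans hreindex hffge) (le_of_lt hEpos))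
    nlinarith [hEpos, hfin]
  obtain ⟨c, w, hw0, hwsum, hwcov⟩ := cover n hn βf δm hδpos hβmono (α*Ξ) hA
  refine ⟨n, c, w, by omega, hw0, ?_, ?_⟩
  · have hlog4 : 1 ≤ Real.log 4 := by
      rw [Real.le_log_iff_exp_le (by norm_num)]
      calc Real.exp 1 ≤ 2.7182818286 := le_of_lt Real.exp_one_lt_d9
      _ ≤ 4 := by norm_num
    have hper : ∀ m ∈ Finset.range n, 2*(α*Ξ) + 2/δm m ≤ 2*α*Ξ + 2*Θ*Real.log 4 := by
      intro m hm'
      have hm := Finset.mem_range.mp hm'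
      have h1 : (δm m)⁻¹ ≤ Θ := hΘge m hm
      have h2 : 0 < δm m := hδpos m hm
      have h3 : 2/δm m ≤ 2*Θ := by
        rw [div_eq_mul_inv]
        linarith
      have h4 : 2*Θ ≤ 2*Θ*Real.log 4 := by nlinarith
      have e : 2*(α*Ξ) = 2*α*Ξ := by ring
      linarith
    calc ∑ i ∈ Finset.range n, w i ≤ ∑ m ∈ Finset.range n, (2*(α*Ξ) + 2/δm m) := hwsum
    _ ≤ ∑ m ∈ Finset.range n, (2*α*Ξ + 2*Θ*Real.log 4) := Finset.sum_le_sum hper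
    _ = n * (2*α*Ξ + 2*Θ*Real.log 4) := by
        rw [Finset.sum_const, Finset.card_range, nsmul_eq_mul]
    _ = 2 * α * (((n+1 : ℕ) : ℝ) - 1) * Ξ + 2 * (((n+1 : ℕ) : ℝ) - 1) * Θ * Real.log 4 := by
        push_cast
        ring
  · intro z hz hbadz
    exact hwcov z.re (hbad z hz hbadz)
end
end

section
/- Let k ≥ 2, let λ_1, …, λ_k ∈ ℂ with Re λ_1 < Re λ_2 < … < Re λ_k, let a_1, …, a_k be nonzero complex numbers, and set y(z) = Σ_{j=1}^k a_j e^{λ_j z}. Let u ∈ ℝ and let φ_u be the least concave majorant of the points (Re λ_j, ln|a_j| + u·Re λ_j), j = 1,…,k. If |φ_u(Re λ_{j+1}) − φ_u(Re λ_j)| ≥ ln 4 for every j = 1,…,k−1, then u ∈ G(y,0), i.e., there exist an index i and ε > 0 with |a_i e^{λ_i u}| ≥ (1+ε)·Σ_{j≠i} |a_j e^{λ_j u}|. -/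
/-- The least concave majorant of the points `(x j, y j)`, `j < k`, on the interval `[a, b]`:
its value at `μ` is the infimum of `ψ μ` over all functions `ψ : ℝ → ℝ` concave on `[a, b]`
with `ψ (x j) ≥ y j` for all `j < k`. -/
noncomputable def leastConcaveMajorant (a b : ℝ) (k : ℕ) (x y : ℕ → ℝ) (μ : ℝ) : ℝ :=
  sInf {t : ℝ | ∃ ψ : ℝ → ℝ, ConcaveOn ℝ (Set.Icc a b) ψ ∧
    (∀ j < k, y j ≤ ψ (x j)) ∧ t = ψ μ}

lemma glem_aux (n : ℕ) : ∑ d ∈ Finset.range n, ((1:ℝ)/4)^(d+1) ≤ 1/3 := by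
  have h1 : ∑ d ∈ Finset.range n, ((1:ℝ)/4)^(d+1)
      = (∑ d ∈ Finset.range n, ((1:ℝ)/4)^d) * (1/4) := by
    rw [Finset.sum_mul]
    exact Finset.sum_congr rfl fun d _ => (pow_succ _ _)
  rw [h1, geom_sum_eq (by norm_num)]
  have h2 : ((1/4:ℝ)^n - 1) / (1/4 - 1) * (1/4) = (1 - (1/4)^n) / 3 := by ring
  have : (0:ℝ) ≤ (1/4)^n := by positivity
  rw [h2]
  linarith

lemma geomb_aux {i k : ℕ} (hik : i < k) :
    ∑ j ∈ (Finset.range k).erase i, ((1:ℝ)/4)^(Nat.dist j i) ≤ 2/3 := by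
  have hsplit : (Finset.range k).erase i = Finset.range i ∪ Finset.Ico (i+1) k := by
    ext j
    simp only [Finset.mem_erase, Finset.mem_range, Finset.mem_union, Finset.mem_Ico]
    omega
  have hdisj : Disjoint (Finset.range i) (Finset.Ico (i+1) k) := by
    simp only [Finset.disjoint_left, Finset.mem_range, Finset.mem_Ico]
    omega
  rw [hsplit, Finset.sum_union hdisj]
  have h1 : ∑ j ∈ Finset.range i, ((1:ℝ)/4)^(Nat.dist j i)
      = ∑ j ∈ Finset.range i, ((1:ℝ)/4)^(j+1) := by
    rw [← Finset.sum_range_reflect (fun j => ((1:ℝ)/4)^(Nat.dist j i)) i]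
    refine Finset.sum_congr rfl fun j hj => ?_
    have hj' : j < i := Finset.mem_range.mp hj
    have : Nat.dist (i - 1 - j) i = j + 1 := by
      rw [Nat.dist_eq_sub_of_le (by omega)]; omega
    rw [this]
  have h2 : ∑ j ∈ Finset.Ico (i+1) k, ((1:ℝ)/4)^(Nat.dist j i)
      = ∑ d ∈ Finset.range (k - (i+1)), ((1:ℝ)/4)^(d+1) := by
    rw [Finset.sum_Ico_eq_sum_range]
    refine Finset.sum_congr rfl fun d _ => ?_
    have : Nat.dist (i + 1 + d) i = d + 1 := by
      rw [Nat.dist_eq_sub_of_le_right (by omega)]; omega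
    rw [this]
  rw [h1, h2]
  have := glem_aux i
  have := glem_aux (k - (i+1))
  linarith

lemma num_pos_of_div_pos {p q : ℝ} (hq : 0 < q) (h : 0 < p / q) : 0 < p := by
  have := mul_pos h hq
  rwa [div_mul_cancel₀ p (ne_of_gt hq)] at this

lemma num_neg_of_div_neg {p q : ℝ} (hq : 0 < q) (h : p / q < 0) : p < 0 := by
  have := mul_neg_of_neg_of_pos h hq
  rwa [div_mul_cancel₀ p (ne_of_gt hq)] at this

lemma lcm_key (k : ℕ) (hk : 2 ≤ k) (x y : ℕ → ℝ)
    (hx : ∀ j, j + 1 < k → x j < x (j + 1))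
    (h : ∀ j, j + 1 < k →
      Real.log 4 ≤ |leastConcaveMajorant (x 0) (x (k-1)) k x y (x (j+1))
        - leastConcaveMajorant (x 0) (x (k-1)) k x y (x j)|) :
    ∃ i < k, ∀ j < k, y j ≤ y i - Real.log 4 * (Nat.dist j i : ℝ) := by
  set F := leastConcaveMajorant (x 0) (x (k-1)) k x y with hF
  set S : ℝ → Set ℝ := fun μ => {t : ℝ | ∃ ψ : ℝ → ℝ,
    ConcaveOn ℝ (Set.Icc (x 0) (x (k-1))) ψ ∧ (∀ j < k, y j ≤ ψ (x j)) ∧ t = ψ μ} with hS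
  have hFS : ∀ μ, F μ = sInf (S μ) := fun μ => rfl
  have hL4 : 0 < Real.log 4 := Real.log_pos (by norm_num)
  -- monotonicity of x
  have hxle : ∀ p q, p ≤ q → q < k → x p ≤ x q := by
    intro p q hpq
    induction q, hpq using Nat.le_induction with
    | base => intro _; exact le_rfl
    | succ n hn ih =>
      intro hnk
      exact le_trans (ih (by omega)) (le_of_lt (hx n hnk))
  have hIcc : ∀ j, j < k → x j ∈ Set.Icc (x 0) (x (k-1)) := by
    intro j hj
    exact ⟨hxle 0 j (Nat.zero_le _) hj, hxle j (k-1) (by omega) (by omega)⟩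
  -- argmax
  obtain ⟨i, hikmem, hmax'⟩ := Finset.exists_max_image (Finset.range k) y
    ⟨0, Finset.mem_range.mpr (by omega)⟩
  have hik : i < k := Finset.mem_range.mp hikmem
  have hmax : ∀ j < k, y j ≤ y i := fun j hj => hmax' j (Finset.mem_range.mpr hj)
  set M := y i with hM
  -- constant function M is admissible
  have hconstmem : ∀ μ, M ∈ S μ :=
    fun μ => ⟨fun _ => M, concaveOn_const M (convex_Icc _ _), fun j hj => hmax j hj, rfl⟩
  have hne : ∀ μ, (S μ).Nonempty := fun μ => ⟨M, hconstmem μ⟩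
  -- lower bound for admissible functions
  have hlb : ∀ ψ : ℝ → ℝ, ConcaveOn ℝ (Set.Icc (x 0) (x (k-1))) ψ →
      (∀ j < k, y j ≤ ψ (x j)) → ∀ μ ∈ Set.Icc (x 0) (x (k-1)),
      min (y 0) (y (k-1)) ≤ ψ μ := by
    intro ψ hψ hm μ hμ
    have h01 : x 0 ≤ x (k-1) := hxle 0 (k-1) (by omega) (by omega)
    rw [← segment_eq_Icc h01] at hμ
    obtain ⟨t, s, ht, hs, hts, rfl⟩ := hμ
    have hcomb := hψ.2 (hIcc 0 (by omega)) (hIcc (k-1) (by omega)) ht hs hts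
    have h0 := hm 0 (by omega)
    have h1 := hm (k-1) (by omega)
    have hm0 : min (y 0) (y (k-1)) ≤ y 0 := min_le_left _ _
    have hm1 : min (y 0) (y (k-1)) ≤ y (k-1) := min_le_right _ _
    simp only [smul_eq_mul] at hcomb ⊢
    have hco : t * (y 0 ⊓ y (k-1)) + s * (y 0 ⊓ y (k-1)) = y 0 ⊓ y (k-1) := by
      rw [← add_mul, hts, one_mul]
    have e0 := mul_le_mul_of_nonneg_left (le_trans hm0 h0) ht
    have e1 := mul_le_mul_of_nonneg_left (le_trans hm1 h1) hs
    linarith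
  have hbdd : ∀ μ ∈ Set.Icc (x 0) (x (k-1)), BddBelow (S μ) := by
    intro μ hμ
    refine ⟨min (y 0) (y (k-1)), ?_⟩
    rintro t ⟨ψ, hψ, hm, rfl⟩
    exact hlb ψ hψ hm μ hμ
  -- F ≤ M on the interval
  have hFle : ∀ μ ∈ Set.Icc (x 0) (x (k-1)), F μ ≤ M := by
    intro μ hμ
    exact csInf_le (hbdd μ hμ) (hconstmem μ)
  -- y j ≤ F (x j)
  have hyF : ∀ j < k, y j ≤ F (x j) := by
    intro j hj
    refine le_csInf (hne _) ?_
    rintro t ⟨ψ, hψ, hm, rfl⟩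
    exact hm j hj
  -- F is concave
  have hconc : ConcaveOn ℝ (Set.Icc (x 0) (x (k-1))) F := by
    refine ⟨convex_Icc _ _, ?_⟩
    intro p hp q hq t s ht hs hts
    refine le_csInf (hne _) ?_
    rintro r ⟨ψ, hψ, hm, rfl⟩
    have h1 : F p ≤ ψ p := csInf_le (hbdd p hp) ⟨ψ, hψ, hm, rfl⟩
    have h2 : F q ≤ ψ q := csInf_le (hbdd q hq) ⟨ψ, hψ, hm, rfl⟩
    have h3 := hψ.2 hp hq ht hs hts
    simp only [smul_eq_mul] at h3 ⊢
    nlinarith [mul_le_mul_of_nonneg_left h1 ht, mul_le_mul_of_nonneg_left h2 hs]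
  -- slopes
  set sl : ℕ → ℝ := fun j => (F (x (j+1)) - F (x j)) / (x (j+1) - x j) with hsl
  have hslope_adj : ∀ j, j + 2 < k → sl (j+1) ≤ sl j := by
    intro j hj
    have := hconc.slope_anti_adjacent (hIcc j (by omega)) (hIcc (j+2) (by omega))
      (hx j (by omega)) (hx (j+1) (by omega))
    exact this
  have hdpos : ∀ j, j + 1 < k → 0 < x (j+1) - x j := fun j hj => sub_pos.mpr (hx j hj)
  -- claim T: if slope positive beyond i, F blows up
  have claimT : ∀ j (hij : i ≤ j), j + 1 < k → 0 < sl j →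
      M + Real.log 4 * ((j:ℝ) + 1 - i) ≤ F (x (j+1)) := by
    intro j hij
    induction j, hij using Nat.le_induction with
    | base =>
      intro hk1 hpos
      have hd : 0 < F (x (i+1)) - F (x i) := num_pos_of_div_pos (hdpos i hk1) hpos
      have habs := h i hk1
      rw [abs_of_pos hd] at habs
      have hyFi := hyF i hik
      have : M + Real.log 4 * ((i:ℝ) + 1 - i) = M + Real.log 4 := by ring
      rw [this]
      linarith
    | succ n hn ih =>
      intro hk1 hpos
      have hsl' : 0 < sl n := lt_of_lt_of_le hpos (hslope_adj n hk1)
      have hprev := ih (by omega) hsl'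
      have hd : 0 < F (x (n+2)) - F (x (n+1)) := num_pos_of_div_pos (hdpos (n+1) hk1) hpos
      have habs := h (n+1) hk1
      rw [abs_of_pos hd] at habs
      push_cast
      push_cast at hprev
      linarith
  -- key1: steps after i go down by log 4
  have key1 : ∀ j, i ≤ j → j + 1 < k → F (x (j+1)) ≤ F (x j) - Real.log 4 := by
    intro j hij hjk
    by_contra hcon
    push_neg at hcon
    have habs := h j hjk
    have hd : Real.log 4 ≤ F (x (j+1)) - F (x j) := by
      rcases abs_cases (F (x (j+1)) - F (x j)) with ⟨heq, _⟩ | ⟨heq, _⟩ <;>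
        rw [heq] at habs <;> linarith
    have hpos : 0 < sl j := by
      rw [hsl]
      exact div_pos (by linarith) (hdpos j hjk)
    have hT := claimT j hij hjk hpos
    have hle := hFle (x (j+1)) (hIcc (j+1) (by omega))
    have : (1:ℝ) ≤ (j:ℝ) + 1 - i := by
      have : (i:ℝ) ≤ j := Nat.cast_le.mpr hij
      linarith
    nlinarith
  -- claim T': if slope negative before i, F blows up
  have claimT' : ∀ n, ∀ j, j + n + 1 = i → sl j < 0 →
      M + Real.log 4 * ((n:ℝ) + 1) ≤ F (x j) := by
    intro n
    induction n with
    | zero =>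
      intro j hji hneg
      have hjk : j + 1 < k := by omega
      have hd : F (x (j+1)) - F (x j) < 0 := num_neg_of_div_neg (hdpos j hjk) hneg
      have habs := h j hjk
      rw [abs_of_neg hd] at habs
      have hji' : j + 1 = i := by omega
      have hyFi : M ≤ F (x (j + 1)) := by rw [hji']; exact hyF i hik
      push_cast
      linarith
    | succ n ih =>
      intro j hji hneg
      have hjk : j + 2 < k := by omega
      have hsl' : sl (j+1) < 0 := lt_of_le_of_lt (hslope_adj j hjk) hneg
      have hprev := ih (j+1) (by omega) hsl'
      have hd : F (x (j+1)) - F (x j) < 0 :=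
        num_neg_of_div_neg (hdpos j (by omega)) hneg
      have habs := h j (by omega)
      rw [abs_of_neg hd] at habs
      push_cast at hprev ⊢
      linarith
  -- key2: steps before i go up by log 4
  have key2 : ∀ j, j + 1 ≤ i → F (x j) ≤ F (x (j+1)) - Real.log 4 := by
    intro j hji
    have hjk : j + 1 < k := by omega
    by_contra hcon
    push_neg at hcon
    have habs := h j hjk
    have hd : F (x (j+1)) - F (x j) ≤ -Real.log 4 := by
      rcases abs_cases (F (x (j+1)) - F (x j)) with ⟨heq, _⟩ | ⟨heq, _⟩ <;>
        rw [heq] at habs <;> linarith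
    have hneg : sl j < 0 := by
      rw [hsl]
      exact div_neg_of_neg_of_pos (by linarith) (hdpos j hjk)
    have hT := claimT' (i - j - 1) j (by omega) hneg
    have hle := hFle (x j) (hIcc j (by omega))
    have h1 : (0:ℝ) ≤ ((i - j - 1 : ℕ):ℝ) := Nat.cast_nonneg _
    nlinarith
  -- telescoping after i
  have after : ∀ n, i + n < k → F (x (i + n)) ≤ M - Real.log 4 * n := by
    intro n
    induction n with
    | zero =>
      intro _
      simpa using hFle (x i) (hIcc i hik)
    | succ n ih =>
      intro hnk
      have h1 := key1 (i + n) (by omega) (by omega)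
      have h2 := ih (by omega)
      have : i + (n + 1) = (i + n) + 1 := by omega
      rw [this]
      push_cast
      push_cast at h2
      linarith
  -- telescoping before i
  have before : ∀ n, n ≤ i → F (x (i - n)) ≤ M - Real.log 4 * n := by
    intro n
    induction n with
    | zero =>
      intro _
      simpa using hFle (x i) (hIcc i hik)
    | succ n ih =>
      intro hni
      have h1 := key2 (i - (n+1)) (by omega)
      have h2 := ih (by omega)
      have heq : i - (n+1) + 1 = i - n := by omega
      rw [heq] at h1
      push_cast
      linarith
  refine ⟨i, hik, ?_⟩
  intro j hj
  rcases le_or_gt i j with hij | hij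
  · have hd : Nat.dist j i = j - i := Nat.dist_eq_sub_of_le_right hij
    have := after (j - i) (by omega)
    have heq : i + (j - i) = j := by omega
    rw [heq] at this
    have hyj := hyF j hj
    rw [hd]
    linarith
  · have hd : Nat.dist j i = i - j := Nat.dist_eq_sub_of_le (by omega)
    have := before (i - j) (by omega)
    have heq : i - (i - j) = j := by omega
    rw [heq] at this
    have hyj := hyF j hj
    rw [hd]
    linarith

/-- If every consecutive increment of the least concave majorant `φ_u` of the
points `(Re λ_j, ln|a_j| + u Re λ_j)` is at least `ln 4` in absolute value, then `u` lies in
the domain of single-term dominance of `y(z) = Σ_j a_j e^{λ_j z}` on the real line. -/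
theorem stmt_6 (k : ℕ) (hk : 2 ≤ k) (l : ℕ → ℂ)
    (hmono : ∀ j, j + 1 < k → (l j).re < (l (j + 1)).re)
    (a : ℕ → ℂ) (ha : ∀ j < k, a j ≠ 0) (u : ℝ)
    (h : ∀ j, j + 1 < k →
      Real.log 4 ≤
        |leastConcaveMajorant ((l 0).re) ((l (k - 1)).re) k (fun j => (l j).re)
            (fun j => Real.log ‖a j‖ + u * (l j).re) ((l (j + 1)).re)
         - leastConcaveMajorant ((l 0).re) ((l (k - 1)).re) k (fun j => (l j).re)
            (fun j => Real.log ‖a j‖ + u * (l j).re) ((l j).re)|) :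
    ∃ i < k, ∃ ε : ℝ, 0 < ε ∧
      (1 + ε) * ∑ j ∈ (Finset.range k).erase i,
          ‖a j * Complex.exp (l j * (u : ℂ))‖
        ≤ ‖a i * Complex.exp (l i * (u : ℂ))‖ := by
  set Y : ℕ → ℝ := fun j => Real.log ‖a j‖ + u * (l j).re with hY
  obtain ⟨i, hik, hbound⟩ := lcm_key k hk (fun j => (l j).re) Y hmono h
  -- the terms equal exp (Y j)
  have hB : ∀ j < k, ‖a j * Complex.exp (l j * (u : ℂ))‖ = Real.exp (Y j) := by
    intro j hj
    have hapos : 0 < ‖a j‖ := norm_pos_iff.mpr (ha j hj)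
    rw [norm_mul, Complex.norm_exp]
    rw [hY]
    simp only []
    rw [Real.exp_add, Real.exp_log hapos]
    congr 1
    rw [Complex.mul_re]
    simp [mul_comm]
  have hL4 : 0 < Real.log 4 := Real.log_pos (by norm_num)
  refine ⟨i, hik, 1/2, by norm_num, ?_⟩
  have hterm : ∀ j ∈ (Finset.range k).erase i,
      ‖a j * Complex.exp (l j * (u : ℂ))‖
        ≤ Real.exp (Y i) * ((1:ℝ)/4)^(Nat.dist j i) := by
    intro j hj
    obtain ⟨hji, hjk⟩ := Finset.mem_erase.mp hj
    have hjk' : j < k := Finset.mem_range.mp hjk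
    rw [hB j hjk']
    have hb := hbound j hjk'
    have : Real.exp (Y j) ≤ Real.exp (Y i - Real.log 4 * (Nat.dist j i : ℝ)) :=
      Real.exp_le_exp.mpr hb
    refine this.trans_eq ?_
    rw [Real.exp_sub, mul_comm (Real.log 4) ((Nat.dist j i : ℕ) : ℝ),
      Real.exp_nat_mul, Real.exp_log (by norm_num : (0:ℝ) < 4),
      div_eq_mul_inv, one_div, inv_pow]
  have hsum : ∑ j ∈ (Finset.range k).erase i,
      ‖a j * Complex.exp (l j * (u : ℂ))‖ ≤ Real.exp (Y i) * (2/3) := by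
    calc ∑ j ∈ (Finset.range k).erase i, ‖a j * Complex.exp (l j * (u : ℂ))‖
        ≤ ∑ j ∈ (Finset.range k).erase i, Real.exp (Y i) * ((1:ℝ)/4)^(Nat.dist j i) :=
          Finset.sum_le_sum hterm
      _ = Real.exp (Y i) * ∑ j ∈ (Finset.range k).erase i, ((1:ℝ)/4)^(Nat.dist j i) := by
          rw [Finset.mul_sum]
      _ ≤ Real.exp (Y i) * (2/3) :=
          mul_le_mul_of_nonneg_left (geomb_aux hik) (Real.exp_pos _).le
  rw [hB i hik]
  linarith
end

section
/- Let k ≥ 1, let A and B be nonzero polynomials with complex coefficients with deg A + deg B ≤ k, let λ, λ' ∈ ℂ with θ := Re(λ − λ') ≠ 0, and let Θ > 0 satisfy Θ ≥ |θ|^{−1}. Fix v ∈ ℝ and suppose u₀ ∈ ℝ is such that |Re((u₀ + iv) − z_m)| ≥ 4kΘ for every root z_m of A and of B (in particular A and B do not vanish at u₀ + iv). Then the function u ↦ ln|A(u+iv) e^{λ(u+iv)} / (B(u+iv) e^{λ'(u+iv)})| is differentiable at u₀ and the absolute value of its derivative at u₀ is at least |θ|/2. -/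
open Polynomial Complex

lemma helper_hasDerivAt_poly (P : ℂ[X]) (v u : ℝ) :
    HasDerivAt (fun u : ℝ => P.eval ((u : ℂ) + (v : ℂ) * Complex.I))
      (P.derivative.eval ((u : ℂ) + (v : ℂ) * Complex.I)) u := by
  have h1 : HasDerivAt (fun u : ℝ => (u : ℂ) + (v : ℂ) * Complex.I) 1 u := by
    simpa using (Complex.ofRealCLM.hasDerivAt (x := u)).add_const ((v : ℂ) * Complex.I)
  have h2 := (P.hasDerivAt ((u : ℂ) + (v : ℂ) * Complex.I)).hasFDerivAt.restrictScalars ℝ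
  refine (h2.comp_hasDerivAt u h1).congr_deriv ?_
  simp

lemma helper_hasDerivAt_log_abs {F : ℝ → ℂ} {F' : ℂ} {u : ℝ}
    (hF : HasDerivAt F F' u) (h0 : F u ≠ 0) :
    HasDerivAt (fun x => Real.log (Norm.norm (F x))) ((F' / F u).re) u := by
  have hre : HasDerivAt (fun x => (F x).re) F'.re u := by
    exact Complex.reCLM.hasFDerivAt.comp_hasDerivAt u hF
  have him : HasDerivAt (fun x => (F x).im) F'.im u := by
    exact Complex.imCLM.hasFDerivAt.comp_hasDerivAt u hF
  have hsq : HasDerivAt (fun x => (F x).re ^ 2 + (F x).im ^ 2)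
      (2 * (F u).re * F'.re + 2 * (F u).im * F'.im) u := by
    have := ((hre.pow 2).add (him.pow 2))
    refine this.congr_deriv ?_
    ring
  have hne : (F u).re ^ 2 + (F u).im ^ 2 ≠ 0 := by
    have := Complex.normSq_pos.2 h0
    rw [Complex.normSq_apply] at this
    nlinarith [this]
  have hlog := ((Real.hasDerivAt_log hne).comp u hsq).div_const 2
  have heq : (fun x => Real.log (Norm.norm (F x))) =
      fun x => Real.log ((F x).re ^ 2 + (F x).im ^ 2) / 2 := by
    funext x
    rw [Complex.norm_def, Complex.normSq_apply]
    rw [show (F x).re * (F x).re + (F x).im * (F x).im = (F x).re ^ 2 + (F x).im ^ 2 by ring]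
    exact Real.log_sqrt (add_nonneg (sq_nonneg _) (sq_nonneg _))
  rw [heq]
  refine hlog.congr_deriv ?_
  rw [Complex.div_re, Complex.normSq_apply]
  simp only [div_eq_mul_inv]
  ring

lemma helper_logderiv_prod (s : Multiset ℂ) (z : ℂ) (hz : ∀ r ∈ s, z ≠ r) :
    Polynomial.eval z (Polynomial.derivative (s.map fun r => Polynomial.X - Polynomial.C r).prod) /
      Polynomial.eval z (s.map fun r => Polynomial.X - Polynomial.C r).prod
      = (s.map fun r => (z - r)⁻¹).sum := by
  induction s using Multiset.induction with
  | empty => simp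
  | cons r s ih =>
    have hzr : z - r ≠ 0 := sub_ne_zero.2 (hz r (Multiset.mem_cons_self r s))
    have hz' : ∀ a ∈ s, z ≠ a := fun a ha => hz a (Multiset.mem_cons_of_mem ha)
    have hQ : Polynomial.eval z (s.map fun r => Polynomial.X - Polynomial.C r).prod ≠ 0 := by
      rw [Polynomial.eval_multiset_prod]
      refine Multiset.prod_ne_zero ?_
      intro h
      rw [Multiset.mem_map] at h
      obtain ⟨p, hp, h0⟩ := h
      rw [Multiset.mem_map] at hp
      obtain ⟨b, hb, rfl⟩ := hp
      simp only [Polynomial.eval_sub, Polynomial.eval_X, Polynomial.eval_C] at h0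
      exact sub_ne_zero.2 (hz' b hb) h0
    rw [Multiset.map_cons, Multiset.prod_cons, derivative_mul, Multiset.map_cons,
      Multiset.sum_cons, ← ih hz']
    simp only [derivative_sub, derivative_X, derivative_C, sub_zero, one_mul,
      Polynomial.eval_add, Polynomial.eval_mul, Polynomial.eval_sub, Polynomial.eval_X,
      Polynomial.eval_C]
    field_simp

lemma helper_logderiv_bound (P : ℂ[X]) (hP : P ≠ 0) (z : ℂ) (ε : ℝ) (hε : 0 < ε)
    (h : ∀ r : ℂ, P.IsRoot r → ε ≤ |(z - r).re|) :
    P.eval z ≠ 0 ∧ ‖P.derivative.eval z / P.eval z‖ ≤ (P.natDegree : ℝ) / ε := by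
  have hroot : ∀ r ∈ P.roots, ε ≤ Norm.norm (z - r) := by
    intro r hr
    exact le_trans (h r ((Polynomial.mem_roots hP).1 hr)) (Complex.abs_re_le_norm _)
  have hz : ∀ r ∈ P.roots, z ≠ r := by
    intro r hr heq
    have := hroot r hr
    rw [heq, sub_self] at this
    simp at this
    linarith
  have hcard : P.roots.card = P.natDegree :=
    (Polynomial.splits_iff_card_roots).1 (IsAlgClosed.splits P)
  have hfac := Polynomial.C_leadingCoeff_mul_prod_multiset_X_sub_C hcard
  have hQ : Polynomial.eval z (P.roots.map fun r => Polynomial.X - Polynomial.C r).prod ≠ 0 := by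
    rw [Polynomial.eval_multiset_prod]
    refine Multiset.prod_ne_zero ?_
    intro hmem
    rw [Multiset.mem_map] at hmem
    obtain ⟨p, hp, h0⟩ := hmem
    rw [Multiset.mem_map] at hp
    obtain ⟨b, hb, rfl⟩ := hp
    simp only [Polynomial.eval_sub, Polynomial.eval_X, Polynomial.eval_C] at h0
    exact sub_ne_zero.2 (hz b hb) h0
  have hlc : P.leadingCoeff ≠ 0 := Polynomial.leadingCoeff_ne_zero.2 hP
  have hPz : P.eval z ≠ 0 := by
    rw [← hfac, Polynomial.eval_mul, Polynomial.eval_C]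
    exact mul_ne_zero hlc hQ
  refine ⟨hPz, ?_⟩
  have hratio : P.derivative.eval z / P.eval z
      = (P.roots.map fun r => (z - r)⁻¹).sum := by
    conv_lhs => rw [← hfac]
    rw [derivative_mul, derivative_C, zero_mul, zero_add, Polynomial.eval_mul,
      Polynomial.eval_mul, Polynomial.eval_C, mul_div_mul_left _ _ hlc]
    exact helper_logderiv_prod _ _ hz
  rw [hratio]
  calc ‖(P.roots.map fun r => (z - r)⁻¹).sum‖
      ≤ ((P.roots.map fun r => (z - r)⁻¹).map norm).sum := norm_multiset_sum_le _
    _ ≤ (Multiset.card ((P.roots.map fun r => (z - r)⁻¹).map norm)) • ε⁻¹ := by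
        refine Multiset.sum_le_card_nsmul _ _ ?_
        intro x hx
        rw [Multiset.mem_map] at hx
        obtain ⟨y, hy, rfl⟩ := hx
        rw [Multiset.mem_map] at hy
        obtain ⟨r, hr, rfl⟩ := hy
        rw [norm_inv]
        refine inv_anti₀ hε ?_
        simpa using hroot r hr
    _ ≤ (P.natDegree : ℝ) / ε := by
        simp [Multiset.card_map, hcard, nsmul_eq_mul, div_eq_mul_inv]




/-- Let `A, B` be nonzero polynomials with `deg A + deg B ≤ k`, let
`θ = Re(λ − λ') ≠ 0` and `Θ ≥ |θ|⁻¹`, `Θ > 0`. If `u₀ + iv` is at horizontal distance at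
least `4kΘ` from every root of `A` and of `B`, then
`u ↦ ln|A(u+iv) e^{λ(u+iv)} / (B(u+iv) e^{λ'(u+iv)})|` is differentiable at `u₀` and the
absolute value of its derivative there is at least `|θ|/2`. -/
theorem stmt_15 (k : ℕ) (hk : 1 ≤ k) (A B : Polynomial ℂ) (hA : A ≠ 0) (hB : B ≠ 0)
    (hdeg : A.natDegree + B.natDegree ≤ k)
    (lam lam' : ℂ) (hθ : (lam - lam').re ≠ 0)
    (Θ : ℝ) (hΘpos : 0 < Θ) (hΘ : |(lam - lam').re|⁻¹ ≤ Θ)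
    (v u₀ : ℝ)
    (hroots : ∀ w : ℂ, (A.IsRoot w ∨ B.IsRoot w) →
      4 * (k : ℝ) * Θ ≤ |(((u₀ : ℂ) + (v : ℂ) * Complex.I) - w).re|) :
    DifferentiableAt ℝ (fun u : ℝ => Real.log (Norm.norm
        (A.eval ((u : ℂ) + (v : ℂ) * Complex.I) *
            Complex.exp (lam * ((u : ℂ) + (v : ℂ) * Complex.I)) /
         (B.eval ((u : ℂ) + (v : ℂ) * Complex.I) *
            Complex.exp (lam' * ((u : ℂ) + (v : ℂ) * Complex.I)))))) u₀ ∧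
      |(lam - lam').re| / 2 ≤
        |deriv (fun u : ℝ => Real.log (Norm.norm
          (A.eval ((u : ℂ) + (v : ℂ) * Complex.I) *
              Complex.exp (lam * ((u : ℂ) + (v : ℂ) * Complex.I)) /
           (B.eval ((u : ℂ) + (v : ℂ) * Complex.I) *
              Complex.exp (lam' * ((u : ℂ) + (v : ℂ) * Complex.I)))))) u₀| := by

  set z₀ : ℂ := (u₀ : ℂ) + (v : ℂ) * Complex.I with hz₀
  have hk1 : (1 : ℝ) ≤ (k : ℝ) := by exact_mod_cast hk
  have hkΘ : 0 < 4 * (k : ℝ) * Θ := by nlinarith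
  obtain ⟨hA0, hAbound⟩ := helper_logderiv_bound A hA z₀ _ hkΘ
    (fun r hr => hroots r (Or.inl hr))
  obtain ⟨hB0, hBbound⟩ := helper_logderiv_bound B hB z₀ _ hkΘ
    (fun r hr => hroots r (Or.inr hr))
  set θ : ℝ := (lam - lam').re with hθdef
  set dA : ℝ := (A.derivative.eval z₀ / A.eval z₀).re with hdA
  set dB : ℝ := (B.derivative.eval z₀ / B.eval z₀).re with hdB
  have hlogA : HasDerivAt (fun u : ℝ => Real.log (Norm.norm
      (A.eval ((u : ℂ) + (v : ℂ) * Complex.I)))) dA u₀ :=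
    helper_hasDerivAt_log_abs (helper_hasDerivAt_poly A v u₀) hA0
  have hlogB : HasDerivAt (fun u : ℝ => Real.log (Norm.norm
      (B.eval ((u : ℂ) + (v : ℂ) * Complex.I)))) dB u₀ :=
    helper_hasDerivAt_log_abs (helper_hasDerivAt_poly B v u₀) hB0
  have hlin : HasDerivAt (fun u : ℝ => θ * u - (lam - lam').im * v) θ u₀ := by
    simpa using ((hasDerivAt_id u₀).const_mul θ).sub_const ((lam - lam').im * v)
  have hg : HasDerivAt (fun u : ℝ =>
      Real.log (Norm.norm (A.eval ((u : ℂ) + (v : ℂ) * Complex.I)))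
        - Real.log (Norm.norm (B.eval ((u : ℂ) + (v : ℂ) * Complex.I)))
        + (θ * u - (lam - lam').im * v)) (dA - dB + θ) u₀ :=
    (hlogA.sub hlogB).add hlin
  have hevA : ∀ᶠ u : ℝ in nhds u₀, A.eval ((u : ℂ) + (v : ℂ) * Complex.I) ≠ 0 :=
    (helper_hasDerivAt_poly A v u₀).continuousAt.eventually_ne hA0
  have hevB : ∀ᶠ u : ℝ in nhds u₀, B.eval ((u : ℂ) + (v : ℂ) * Complex.I) ≠ 0 :=
    (helper_hasDerivAt_poly B v u₀).continuousAt.eventually_ne hB0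
  have hEq : (fun u : ℝ => Real.log (Norm.norm
        (A.eval ((u : ℂ) + (v : ℂ) * Complex.I) *
            Complex.exp (lam * ((u : ℂ) + (v : ℂ) * Complex.I)) /
         (B.eval ((u : ℂ) + (v : ℂ) * Complex.I) *
            Complex.exp (lam' * ((u : ℂ) + (v : ℂ) * Complex.I)))))) =ᶠ[nhds u₀]
      (fun u : ℝ =>
        Real.log (Norm.norm (A.eval ((u : ℂ) + (v : ℂ) * Complex.I)))
        - Real.log (Norm.norm (B.eval ((u : ℂ) + (v : ℂ) * Complex.I)))
        + (θ * u - (lam - lam').im * v)) := by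
    filter_upwards [hevA, hevB] with u hu1 hu2
    rw [norm_div, norm_mul, norm_mul, Complex.norm_exp, Complex.norm_exp,
      Real.log_div (mul_ne_zero (norm_ne_zero_iff.2 hu1) (Real.exp_ne_zero _))
        (mul_ne_zero (norm_ne_zero_iff.2 hu2) (Real.exp_ne_zero _)),
      Real.log_mul (norm_ne_zero_iff.2 hu1) (Real.exp_ne_zero _),
      Real.log_mul (norm_ne_zero_iff.2 hu2) (Real.exp_ne_zero _),
      Real.log_exp, Real.log_exp]
    simp only [hθdef, Complex.mul_re, Complex.add_re, Complex.ofReal_re, Complex.mul_im,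
      Complex.add_im, Complex.ofReal_im, Complex.I_re, Complex.I_im, Complex.sub_re,
      Complex.sub_im]
    ring
  -- arithmetic bound
  have hθpos : 0 < |θ| := abs_pos.2 hθ
  have hAd : |dA| ≤ (A.natDegree : ℝ) / (4 * (k : ℝ) * Θ) := by
    refine le_trans ?_ hAbound
    exact Complex.abs_re_le_norm _
  have hBd : |dB| ≤ (B.natDegree : ℝ) / (4 * (k : ℝ) * Θ) := by
    refine le_trans ?_ hBbound
    exact Complex.abs_re_le_norm _
  have hΘθ : 1 ≤ Θ * |θ| := by
    have h1 := mul_le_mul_of_nonneg_right hΘ (abs_nonneg θ)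
    rwa [inv_mul_cancel₀ (ne_of_gt hθpos)] at h1
  have hsumdeg : (A.natDegree : ℝ) + (B.natDegree : ℝ) ≤ (k : ℝ) := by exact_mod_cast hdeg
  have hb : (A.natDegree : ℝ) / (4 * (k : ℝ) * Θ) + (B.natDegree : ℝ) / (4 * (k : ℝ) * Θ)
      ≤ |θ| / 4 := by
    rw [← add_div, div_le_iff₀ hkΘ]
    calc (A.natDegree : ℝ) + (B.natDegree : ℝ) ≤ (k : ℝ) := hsumdeg
      _ ≤ (k : ℝ) * (Θ * |θ|) := le_mul_of_one_le_right (by linarith) hΘθ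
      _ = |θ| / 4 * (4 * (k : ℝ) * Θ) := by ring
  have hsmall : |dA| + |dB| ≤ |θ| / 4 := le_trans (add_le_add hAd hBd) hb
  have habs1 : |θ| ≤ |dA - dB + θ| + |dA - dB| := by
    have h2 := abs_add_le (dA - dB + θ) (-(dA - dB))
    have h3 : dA - dB + θ + -(dA - dB) = θ := by ring
    rw [h3, abs_neg] at h2
    exact h2
  have habs2 : |dA - dB| ≤ |dA| + |dB| := abs_sub _ _
  refine ⟨hEq.differentiableAt_iff.2 hg.differentiableAt, ?_⟩
  rw [hEq.deriv_eq, hg.deriv]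
  linarith
end
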